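/- arXiv:2503.10083 — 3 statements merged into one kernel-verified Lean document; each statement's English description precedes it below -/
import Mathlib

section
/- Assume char k = 0 and let m ≥ 2. If V is an Aut-stable k-subspace of the commutative polynomial ring A = k[z_1, …, z_m] that is not contained in k·1, then V = A. In other words, k[z_1, …, z_m] with m ≥ 2 has no proper Aut-stable subspaces. (Theorem 3.3(1).) -/
open MvPolynomial Finset

namespace Statement7Aux

set_option linter.unusedSectionVars false

variable {k : Type*} [Field k] [CharZero k] {m : ℕ}

/-- Build an algebra automorphism of a polynomial ring from a substitution with explicit
inverse substitution. -/
noncomputable def mkEquiv (g g' : Fin m → MvPolynomial (Fin m) k)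
    (h1 : ∀ j, aeval g' (g j) = X j) (h2 : ∀ j, aeval g (g' j) = X j) :
    MvPolynomial (Fin m) k ≃ₐ[k] MvPolynomial (Fin m) k :=
  AlgEquiv.ofAlgHom (aeval g) (aeval g')
    (MvPolynomial.algHom_ext fun j => by rw [AlgHom.comp_apply, aeval_X, h2 j, AlgHom.id_apply])
    (MvPolynomial.algHom_ext fun j => by rw [AlgHom.comp_apply, aeval_X, h1 j, AlgHom.id_apply])

@[simp] theorem mkEquiv_apply (g g' : Fin m → MvPolynomial (Fin m) k) (h1 h2) (p) :
    mkEquiv g g' h1 h2 p = aeval g p := rfl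

/-- Vandermonde-style extraction: if all the "polynomial in `t`" combinations lie in a
subspace, then so does each coefficient. -/
theorem extract {M : Type*} [AddCommGroup M] [Module k M] (V : Submodule k M)
    (N : ℕ) (v : ℕ → M)
    (h : ∀ t : k, t ≠ 0 → (∑ i ∈ Finset.range N, t ^ i • v i) ∈ V) :
    ∀ n, n < N → v n ∈ V := by
  intro n hn
  rw [← Submodule.Quotient.mk_eq_zero V]
  rw [← Module.forall_dual_apply_eq_zero_iff k]
  intro φ
  set w : ℕ → k := fun i => φ (Submodule.Quotient.mk (v i)) with hw
  set P : Polynomial k := ∑ i ∈ Finset.range N, Polynomial.monomial i (w i) with hP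
  have hPt : ∀ t : k, t ≠ 0 → P.eval t = 0 := by
    intro t ht
    have h0 : (Submodule.Quotient.mk (∑ i ∈ Finset.range N, t ^ i • v i) : M ⧸ V) = 0 :=
      (Submodule.Quotient.mk_eq_zero V).mpr (h t ht)
    have : P.eval t = φ (Submodule.Quotient.mk (∑ i ∈ Finset.range N, t ^ i • v i)) := by
      rw [← Submodule.mkQ_apply, map_sum, map_sum, hP]
      rw [Polynomial.eval_finset_sum]
      refine Finset.sum_congr rfl fun i _ => ?_
      simp [hw, mul_comm, Submodule.mkQ_apply]
    rw [this, h0, map_zero]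
  have hP0 : P = 0 := by
    apply Polynomial.eq_zero_of_infinite_isRoot
    apply Set.Infinite.mono (s := {x : k | x ≠ 0})
    · intro t ht; exact hPt t ht
    · exact Set.Finite.infinite_compl (Set.finite_singleton 0)
  have : P.coeff n = w n := by
    rw [hP, Polynomial.finset_sum_coeff]
    rw [Finset.sum_eq_single n (fun i _ hi => by rw [Polynomial.coeff_monomial, if_neg hi])
      (fun hn' => absurd (Finset.mem_range.mpr hn) hn')]
    simp
  show w n = 0
  rw [← this, hP0, Polynomial.coeff_zero]


set_option linter.unusedSectionVars false

theorem aeval_monomial_univ (g : Fin m → MvPolynomial (Fin m) k) (s : Fin m →₀ ℕ) (a : k) :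
    aeval g (monomial s a) = C a * ∏ j, g j ^ s j := by
  rw [aeval_monomial, Finsupp.prod_fintype _ _ (fun j => pow_zero (g j))]
  rfl

theorem monomial_eq_univ (s : Fin m →₀ ℕ) (a : k) :
    (monomial s a) = C a * ∏ j, (X j : MvPolynomial (Fin m) k) ^ s j := by
  rw [monomial_eq, Finsupp.prod_fintype _ _ (fun j => pow_zero _)]

theorem degree_sum_univ (s : Fin m →₀ ℕ) : Finsupp.degree s = ∑ j, s j := by
  rw [Finsupp.degree]
  exact Finset.sum_subset (Finset.subset_univ _)
    (fun j _ hj => Finsupp.notMem_support_iff.mp hj)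

theorem degree_le_totalDegree {p : MvPolynomial (Fin m) k} {s : Fin m →₀ ℕ}
    (h : s ∈ p.support) : Finsupp.degree s ≤ p.totalDegree :=
  le_totalDegree h

theorem aeval_scale_isHomogeneous {p : MvPolynomial (Fin m) k} {n : ℕ}
    (hp : p.IsHomogeneous n) (t : k) :
    aeval (fun j => C t * X j) p = t ^ n • p := by
  have key : ∀ s ∈ p.support,
      aeval (fun j => C t * X j) (monomial s (coeff s p))
        = t ^ n • monomial s (coeff s p) := by
    intro s hs
    have hdeg : Finsupp.degree s = n := by
      have := hp (mem_support_iff.mp hs)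
      rw [Finsupp.degree_eq_weight_one]; exact this
    have h1 : ∏ x : Fin m, (C t : MvPolynomial (Fin m) k) ^ s x = C (t ^ n) := by
      calc ∏ x : Fin m, (C t : MvPolynomial (Fin m) k) ^ s x
          = ∏ x : Fin m, (C (t ^ s x) : MvPolynomial (Fin m) k) := by
            refine Finset.prod_congr rfl fun x _ => ?_
            rw [map_pow]
        _ = C (∏ x : Fin m, t ^ s x) := by rw [map_prod]
        _ = C (t ^ ∑ x : Fin m, s x) := by rw [Finset.prod_pow_eq_pow_sum]
        _ = C (t ^ n) := by rw [← degree_sum_univ, hdeg]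
    rw [aeval_monomial_univ]
    calc C (coeff s p) * ∏ j, (C t * X j : MvPolynomial (Fin m) k) ^ s j
        = C (coeff s p) * ((∏ j : Fin m, (C t : MvPolynomial (Fin m) k) ^ s j)
            * ∏ j : Fin m, (X j : MvPolynomial (Fin m) k) ^ s j) := by
          rw [← Finset.prod_mul_distrib]
          refine congrArg _ (Finset.prod_congr rfl fun j _ => ?_)
          rw [mul_pow]
      _ = C (t ^ n) * (C (coeff s p) * ∏ j : Fin m, (X j : MvPolynomial (Fin m) k) ^ s j) := by
          rw [h1]; ring
      _ = t ^ n • monomial s (coeff s p) := by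
          rw [← monomial_eq_univ, smul_eq_C_mul]
  conv_lhs => rw [p.as_sum, map_sum, Finset.sum_congr rfl key, ← Finset.smul_sum]
  rw [← p.as_sum]

theorem aeval_scale (p : MvPolynomial (Fin m) k) (t : k) :
    aeval (fun j => C t * X j) p
      = ∑ n ∈ range (p.totalDegree + 1), t ^ n • homogeneousComponent n p := by
  conv_lhs => rw [← sum_homogeneousComponent p]
  rw [map_sum]
  exact Finset.sum_congr rfl fun n _ =>
    aeval_scale_isHomogeneous (homogeneousComponent_isHomogeneous n p) t

/-- The scaling automorphism `X j ↦ t • X j` for `t ≠ 0`. -/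
noncomputable def scaleEquiv (t : k) (ht : t ≠ 0) :
    MvPolynomial (Fin m) k ≃ₐ[k] MvPolynomial (Fin m) k :=
  mkEquiv (fun j => C t * X j) (fun j => C t⁻¹ * X j)
    (fun j => by
      rw [map_mul, aeval_X, aeval_C, algebraMap_eq, ← mul_assoc, ← map_mul,
        mul_inv_cancel₀ ht, map_one, one_mul])
    (fun j => by
      rw [map_mul, aeval_X, aeval_C, algebraMap_eq, ← mul_assoc, ← map_mul,
        inv_mul_cancel₀ ht, map_one, one_mul])

theorem homogeneousComponent_mem (V : Submodule k (MvPolynomial (Fin m) k))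
    (hstab : ∀ σ : MvPolynomial (Fin m) k ≃ₐ[k] MvPolynomial (Fin m) k, ∀ v ∈ V, σ v ∈ V)
    {p : MvPolynomial (Fin m) k} (hp : p ∈ V) (n : ℕ) :
    homogeneousComponent n p ∈ V := by
  rcases lt_or_ge p.totalDegree n with h | h
  · rw [homogeneousComponent_eq_zero n p h]; exact V.zero_mem
  · refine extract V (p.totalDegree + 1) (fun n => homogeneousComponent n p) ?_ n (by omega)
    intro t ht
    rw [← aeval_scale]
    exact hstab (scaleEquiv t ht) p hp

theorem eval_aeval (x : Fin m → k) (g : Fin m → MvPolynomial (Fin m) k)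
    (p : MvPolynomial (Fin m) k) :
    eval x (aeval g p) = eval (fun j => eval x (g j)) p := by
  induction p using MvPolynomial.induction_on' with
  | monomial s a =>
      rw [aeval_monomial_univ, eval_monomial, map_mul, eval_C, map_prod,
        Finsupp.prod_fintype _ _ (fun j => pow_zero _)]
      refine congrArg _ (Finset.prod_congr rfl fun j _ => ?_)
      rw [map_pow]
  | add p q hp hq => rw [map_add, map_add, hp, hq, map_add]

theorem totalDegree_aeval_le (g : Fin m → MvPolynomial (Fin m) k)
    (hg : ∀ j, (g j).totalDegree ≤ 1) (p : MvPolynomial (Fin m) k) :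
    (aeval g p).totalDegree ≤ p.totalDegree := by
  conv_lhs => rw [p.as_sum]
  rw [map_sum]
  refine totalDegree_finsetSum_le fun s hs => ?_
  rw [aeval_monomial_univ]
  calc (C (coeff s p) * ∏ j, g j ^ s j).totalDegree
      ≤ (C (coeff s p) : MvPolynomial (Fin m) k).totalDegree
        + (∏ j, g j ^ s j).totalDegree := totalDegree_mul _ _
    _ ≤ 0 + ∑ j, (g j ^ s j).totalDegree := by
        gcongr
        · exact le_of_eq (totalDegree_C _)
        · exact totalDegree_finset_prod _ _
    _ ≤ ∑ j, s j := by
        rw [zero_add]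
        refine Finset.sum_le_sum fun j _ => ?_
        calc (g j ^ s j).totalDegree ≤ s j * (g j).totalDegree := totalDegree_pow _ _
          _ ≤ s j * 1 := by gcongr; exact hg j
          _ = s j := mul_one _
    _ ≤ p.totalDegree := by
        rw [← degree_sum_univ]
        exact degree_le_totalDegree hs


theorem sum_homogeneousComponent_of_le {p : MvPolynomial (Fin m) k} {N : ℕ}
    (h : p.totalDegree ≤ N) :
    ∑ d ∈ range (N + 1), homogeneousComponent d p = p := by
  conv_rhs => rw [← sum_homogeneousComponent p]
  symm
  apply Finset.sum_subset
  · exact Finset.range_subset_range.mpr (by omega)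
  · intro d hd hd2
    refine homogeneousComponent_eq_zero d p ?_
    simp only [Finset.mem_range] at hd hd2
    omega

/-- The translation automorphism `X j ↦ X j + c j`. -/
noncomputable def transEquiv (c : Fin m → k) :
    MvPolynomial (Fin m) k ≃ₐ[k] MvPolynomial (Fin m) k :=
  mkEquiv (fun j => X j + C (c j)) (fun j => X j - C (c j))
    (fun j => by rw [map_add, aeval_X, aeval_C, algebraMap_eq, sub_add_cancel])
    (fun j => by rw [map_sub, aeval_X, aeval_C, algebraMap_eq, add_sub_cancel_right])

@[simp] theorem transEquiv_apply (c : Fin m → k) (p : MvPolynomial (Fin m) k) :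
    transEquiv c p = aeval (fun j => X j + C (c j)) p := rfl

theorem eval_smul_isHomogeneous {G : MvPolynomial (Fin m) k} {n : ℕ}
    (h : G.IsHomogeneous n) (t : k) (x : Fin m → k) :
    eval (fun j => t * x j) G = t ^ n * eval x G := by
  have h2 := congrArg (eval x) (aeval_scale_isHomogeneous h t)
  rw [eval_aeval, smul_eq_C_mul, map_mul, eval_C] at h2
  simpa using h2

theorem eval_zero_isHomogeneous {G : MvPolynomial (Fin m) k} {n : ℕ}
    (h : G.IsHomogeneous n) (hn : n ≠ 0) : eval (fun _ => (0:k)) G = 0 := by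
  rw [eval_zero', constantCoeff_eq]
  exact h.coeff_eq_zero (by simpa using hn.symm)

theorem descent (V : Submodule k (MvPolynomial (Fin m) k))
    (hstab : ∀ σ : MvPolynomial (Fin m) k ≃ₐ[k] MvPolynomial (Fin m) k, ∀ v ∈ V, σ v ∈ V)
    {f : MvPolynomial (Fin m) k} {n : ℕ}
    (hfV : f ∈ V) (hf0 : f ≠ 0) (hfh : f.IsHomogeneous n) (hn : 2 ≤ n) :
    ∃ g ∈ V, g ≠ 0 ∧ ∃ d, 1 ≤ d ∧ d < n ∧ g.IsHomogeneous d := by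
  haveI : Infinite k := Infinite.of_injective (Nat.cast : ℕ → k) Nat.cast_injective
  by_contra hcon
  push_neg at hcon
  have hzero : ∀ (c : Fin m → k) (d : ℕ), 1 ≤ d → d < n →
      homogeneousComponent d (transEquiv c f) = 0 := by
    intro c d h1 h2
    by_contra hne
    exact hcon _ (homogeneousComponent_mem V hstab (hstab (transEquiv c) f hfV) d) hne d h1 h2
      (homogeneousComponent_isHomogeneous d _)
  have htd : ∀ c : Fin m → k, (transEquiv c f).totalDegree ≤ n := by
    intro c
    refine le_trans (totalDegree_aeval_le _ (fun j => ?_) f) hfh.totalDegree_le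
    refine (totalDegree_add _ _).trans ?_
    simp [totalDegree_X, totalDegree_C]
  have hdecomp : ∀ c : Fin m → k, transEquiv c f
      = homogeneousComponent 0 (transEquiv c f) + homogeneousComponent n (transEquiv c f) := by
    intro c
    calc transEquiv c f = ∑ d ∈ range (n + 1), homogeneousComponent d (transEquiv c f) :=
          (sum_homogeneousComponent_of_le (htd c)).symm
      _ = ∑ d ∈ ({0, n} : Finset ℕ), homogeneousComponent d (transEquiv c f) := by
          symm
          apply Finset.sum_subset
          · intro d hd
            simp only [Finset.mem_insert, Finset.mem_singleton] at hd
            simp only [Finset.mem_range]; omega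
          · intro d hd hd2
            simp only [Finset.mem_range] at hd
            simp only [Finset.mem_insert, Finset.mem_singleton, not_or] at hd2
            exact hzero c d (by omega) (by omega)
      _ = _ := Finset.sum_pair (by omega)
  set F : (Fin m → k) → k := fun x => eval x f with hF
  have heval : ∀ (c x : Fin m → k),
      F (fun j => x j + c j) = coeff 0 (transEquiv c f)
        + eval x (homogeneousComponent n (transEquiv c f)) := by
    intro c x
    have h2 := congrArg (eval x) (hdecomp c)
    rw [map_add, homogeneousComponent_zero, eval_C, transEquiv_apply, eval_aeval] at h2
    simpa [hF] using h2
  have hc0 : ∀ c : Fin m → k, coeff 0 (transEquiv c f) = F c := by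
    intro c
    have h0 := heval c (fun _ => 0)
    rw [eval_zero_isHomogeneous (homogeneousComponent_isHomogeneous n _) (by omega)] at h0
    simpa using h0.symm
  have hkey : ∀ (t : k) (x c : Fin m → k),
      F (fun j => t * x j + c j) - F c = t ^ n * (F (fun j => x j + c j) - F c) := by
    intro t x c
    have h1 := heval c (fun j => t * x j)
    have h2 := heval c x
    have h3 := eval_smul_isHomogeneous
      (homogeneousComponent_isHomogeneous n (transEquiv c f)) t x
    rw [hc0] at h1 h2
    rw [h3] at h1
    rw [h1, h2]; ring
  obtain ⟨x₀, hx₀⟩ : ∃ x₀, F x₀ ≠ 0 := by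
    by_contra hall; push_neg at hall
    refine hf0 (MvPolynomial.funext fun x => ?_)
    rw [map_zero]; exact hall x
  have hFs : ∀ u : k, F (fun j => u * x₀ j) = u ^ n * F x₀ := fun u =>
    eval_smul_isHomogeneous hfh u x₀
  have hmain : ∀ t : k, (t + 1) ^ n = t ^ n * (2 ^ n - 1) + 1 := by
    intro t
    have hk := hkey t x₀ x₀
    have e1 : F (fun j => t * x₀ j + x₀ j) = (t+1)^n * F x₀ := by
      rw [← hFs (t+1)]; congr 1; funext j; ring
    have e2 : F (fun j => x₀ j + x₀ j) = 2^n * F x₀ := by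
      rw [← hFs 2]; congr 1; funext j; ring
    rw [e1, e2] at hk
    have hmul : ((t+1)^n - (t^n * (2^n - 1) + 1)) * F x₀ = 0 := by linear_combination hk
    rcases mul_eq_zero.mp hmul with h | h
    · exact sub_eq_zero.mp h
    · exact absurd h hx₀
  have hpoly : (Polynomial.X + 1 : Polynomial k) ^ n
      = Polynomial.C ((2:k)^n - 1) * Polynomial.X ^ n + 1 := by
    apply Polynomial.funext
    intro t
    simp only [Polynomial.eval_pow, Polynomial.eval_add, Polynomial.eval_X, Polynomial.eval_one,
      Polynomial.eval_mul, Polynomial.eval_C]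
    rw [hmain t]; ring
  have hco := congrArg (fun q => Polynomial.coeff q 1) hpoly
  simp only [Polynomial.coeff_X_add_one_pow, Polynomial.coeff_add, Polynomial.coeff_C_mul,
    Polynomial.coeff_X_pow, Polynomial.coeff_one, if_neg (by omega : ¬ (1:ℕ) = n),
    if_neg (by omega : (1:ℕ) ≠ 0), Nat.choose_one_right, mul_zero, add_zero] at hco
  have : (n : ℕ) = 0 := Nat.cast_eq_zero.mp hco
  omega


theorem single_of_degree_one {s : Fin m →₀ ℕ} (h : Finsupp.degree s = 1) :
    ∃ j, s = Finsupp.single j 1 := by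
  rw [degree_sum_univ] at h
  obtain ⟨j, hj⟩ : ∃ j, s j ≠ 0 := by
    by_contra hall; push_neg at hall
    rw [Finset.sum_congr rfl fun j _ => hall j, Finset.sum_const_zero] at h
    omega
  have hsum := Finset.add_sum_erase Finset.univ s (Finset.mem_univ j)
  rw [h] at hsum
  have hj1 : s j = 1 := by omega
  have hrest : ∀ i ∈ Finset.univ.erase j, s i = 0 :=
    Finset.sum_eq_zero_iff.mp (by omega)
  refine ⟨j, Finsupp.ext fun i => ?_⟩
  rcases eq_or_ne i j with rfl | hij
  · rw [hj1, Finsupp.single_eq_same]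
  · rw [Finsupp.single_eq_of_ne' hij.symm]
    exact hrest i (Finset.mem_erase.mpr ⟨hij, Finset.mem_univ i⟩)

theorem linear_eq_sum {ℓ : MvPolynomial (Fin m) k} (h : ℓ.IsHomogeneous 1) :
    ℓ = ∑ j, (coeff (Finsupp.single j 1) ℓ) • (X j : MvPolynomial (Fin m) k) := by
  apply MvPolynomial.ext
  intro s
  rw [coeff_sum]
  have hco : ∀ j : Fin m, coeff s ((coeff (Finsupp.single j 1) ℓ) • (X j : MvPolynomial (Fin m) k))
      = (coeff (Finsupp.single j 1) ℓ) * (if Finsupp.single j 1 = s then 1 else 0) := by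
    intro j
    rw [MvPolynomial.coeff_smul, coeff_X', smul_eq_mul]
  rw [Finset.sum_congr rfl fun j _ => hco j]
  by_cases hs : ∃ j : Fin m, s = Finsupp.single j 1
  · obtain ⟨j, rfl⟩ := hs
    rw [Finset.sum_eq_single j]
    · rw [if_pos rfl, mul_one]
    · intro i _ hij
      rw [if_neg, mul_zero]
      intro hcontr
      exact hij (Finsupp.single_left_injective one_ne_zero hcontr)
    · intro hj; exact absurd (Finset.mem_univ j) hj
  · push_neg at hs
    rw [Finset.sum_congr rfl (fun j _ => by rw [if_neg (fun hc => hs j hc.symm), mul_zero]),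
      Finset.sum_const_zero]
    by_contra hne
    obtain ⟨j, hj⟩ := single_of_degree_one (by
      have := h (d := s) hne
      rw [Finsupp.degree_eq_weight_one]; exact this)
    exact hs j hj

theorem X_mem (V : Submodule k (MvPolynomial (Fin m) k))
    (hstab : ∀ σ : MvPolynomial (Fin m) k ≃ₐ[k] MvPolynomial (Fin m) k, ∀ v ∈ V, σ v ∈ V)
    {ℓ : MvPolynomial (Fin m) k} (hV : ℓ ∈ V) (h0 : ℓ ≠ 0)
    (hh : ℓ.IsHomogeneous 1) : ∀ j, (X j : MvPolynomial (Fin m) k) ∈ V := by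
  set a : Fin m → k := fun j => coeff (Finsupp.single j 1) ℓ with ha
  have hsum : ℓ = ∑ j, a j • (X j : MvPolynomial (Fin m) k) := linear_eq_sum hh
  obtain ⟨i, hi⟩ : ∃ i, a i ≠ 0 := by
    by_contra hall; push_neg at hall
    apply h0
    rw [hsum, Finset.sum_congr rfl (fun j _ => by rw [hall j, zero_smul]),
      Finset.sum_const_zero]
  have hXi : (X i : MvPolynomial (Fin m) k) ∈ V := by
    set g : Fin m → MvPolynomial (Fin m) k :=
      Function.update (fun j => C (2:k) * X j) i (X i) with hg
    set g' : Fin m → MvPolynomial (Fin m) k :=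
      Function.update (fun j => C (2⁻¹:k) * X j) i (X i) with hg'
    have hgi : g i = X i := Function.update_self _ _ _
    have hgi' : g' i = X i := Function.update_self _ _ _
    have hgj : ∀ j, j ≠ i → g j = C (2:k) * X j := fun j hj => Function.update_of_ne hj _ _
    have hgj' : ∀ j, j ≠ i → g' j = C (2⁻¹:k) * X j := fun j hj => Function.update_of_ne hj _ _
    have hgg' : ∀ j, aeval g' (g j) = X j := by
      intro j
      rcases eq_or_ne j i with rfl | hji
      · rw [hgi, aeval_X, hgi']
      · rw [hgj j hji, map_mul, aeval_C, aeval_X, algebraMap_eq, hgj' j hji,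
          ← mul_assoc, ← map_mul]
        norm_num
    have hg'g : ∀ j, aeval g (g' j) = X j := by
      intro j
      rcases eq_or_ne j i with rfl | hji
      · rw [hgi', aeval_X, hgi]
      · rw [hgj' j hji, map_mul, aeval_C, aeval_X, algebraMap_eq, hgj j hji,
          ← mul_assoc, ← map_mul]
        norm_num
    set σ := mkEquiv g g' hgg' hg'g with hσdef
    have hσ : σ ℓ = ∑ j, a j • g j := by
      rw [hσdef, mkEquiv_apply]
      conv_lhs => rw [hsum]
      rw [map_sum]
      exact Finset.sum_congr rfl fun j _ => by rw [map_smul, aeval_X]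
    have hkey : (2:k) • ℓ - σ ℓ = a i • X i := by
      rw [hσ]
      conv_lhs => rw [hsum]
      rw [Finset.smul_sum, ← Finset.sum_sub_distrib, Finset.sum_eq_single i]
      · rw [hgi, smul_smul, ← sub_smul]
        congr 1; ring
      · intro j _ hji
        have : a j • (C (2:k) * X j) = ((2:k) * a j) • (X j : MvPolynomial (Fin m) k) := by
          rw [smul_eq_C_mul, ← mul_assoc, ← map_mul, mul_comm (a j) 2, ← smul_eq_C_mul]
        rw [hgj j hji, this, smul_smul, sub_self]
      · intro hi'; exact absurd (Finset.mem_univ i) hi'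
    have hmem : a i • (X i : MvPolynomial (Fin m) k) ∈ V := by
      rw [← hkey]
      exact V.sub_mem (V.smul_mem _ hV) (hstab σ ℓ hV)
    have : (X i : MvPolynomial (Fin m) k) = (a i)⁻¹ • (a i • X i) := by
      rw [smul_smul, inv_mul_cancel₀ hi, one_smul]
    rw [this]
    exact V.smul_mem _ hmem
  intro j
  have := hstab (renameEquiv k (Equiv.swap i j)) _ hXi
  rwa [renameEquiv_apply, rename_X, Equiv.swap_apply_left] at this

theorem one_mem (V : Submodule k (MvPolynomial (Fin m) k))
    (hstab : ∀ σ : MvPolynomial (Fin m) k ≃ₐ[k] MvPolynomial (Fin m) k, ∀ v ∈ V, σ v ∈ V)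
    {ℓ : MvPolynomial (Fin m) k} (hV : ℓ ∈ V) (h0 : ℓ ≠ 0) :
    (1 : MvPolynomial (Fin m) k) ∈ V := by
  haveI : Infinite k := Infinite.of_injective (Nat.cast : ℕ → k) Nat.cast_injective
  obtain ⟨c, hc⟩ : ∃ c : Fin m → k, eval c ℓ ≠ 0 := by
    by_contra hall; push_neg at hall
    refine h0 (MvPolynomial.funext fun x => ?_)
    rw [map_zero]; exact hall x
  have h1 : homogeneousComponent 0 (transEquiv c ℓ) ∈ V :=
    homogeneousComponent_mem V hstab (hstab _ _ hV) 0
  rw [homogeneousComponent_zero] at h1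
  have h2 : coeff 0 (transEquiv c ℓ) = eval c ℓ := by
    rw [transEquiv_apply]
    have e1 : coeff (0 : Fin m →₀ ℕ) ((aeval fun j => X j + C (c j)) ℓ)
        = eval (fun _ => (0:k)) ((aeval fun j => X j + C (c j)) ℓ) := by
      rw [eval_zero', constantCoeff_eq]
    rw [e1, eval_aeval]
    have e2 : (fun j => eval (fun _ => (0:k)) (X j + C (c j))) = c := by
      funext j; simp
    rw [e2]
  rw [h2] at h1
  have : (1 : MvPolynomial (Fin m) k) = (eval c ℓ)⁻¹ • C (eval c ℓ) := by
    rw [smul_eq_C_mul, ← map_mul, inv_mul_cancel₀ hc, map_one]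
  rw [this]
  exact V.smul_mem _ h1


theorem aeval_fix (g : Fin m → MvPolynomial (Fin m) k) {s : Fin m →₀ ℕ} {i0 : Fin m}
    (hg : ∀ j, j ≠ i0 → g j = X j) (hs : s i0 = 0) :
    aeval g (monomial s (1:k)) = monomial s 1 := by
  rw [aeval_monomial_univ, monomial_eq_univ]
  congr 1
  refine Finset.prod_congr rfl fun j _ => ?_
  rcases eq_or_ne j i0 with rfl | hj
  · rw [hs, pow_zero, pow_zero]
  · rw [hg j hj]

theorem monomial_avoid_mem (V : Submodule k (MvPolynomial (Fin m) k))
    (hstab : ∀ σ : MvPolynomial (Fin m) k ≃ₐ[k] MvPolynomial (Fin m) k, ∀ v ∈ V, σ v ∈ V)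
    {i0 : Fin m} (hX : (X i0 : MvPolynomial (Fin m) k) ∈ V)
    {s : Fin m →₀ ℕ} (hs : s i0 = 0) : monomial s (1:k) ∈ V := by
  set q : MvPolynomial (Fin m) k := monomial s 1 with hq
  set g := Function.update X i0 (X i0 + q) with hg
  set g' := Function.update X i0 (X i0 - q) with hg'
  have hgj : ∀ j, j ≠ i0 → g j = X j := fun j hj => Function.update_of_ne hj _ _
  have hgj' : ∀ j, j ≠ i0 → g' j = X j := fun j hj => Function.update_of_ne hj _ _
  have hfix : aeval g q = q := aeval_fix g hgj hs
  have hfix' : aeval g' q = q := aeval_fix g' hgj' hs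
  have hgg' : ∀ j, aeval g' (g j) = X j := by
    intro j
    rcases eq_or_ne j i0 with rfl | hj
    · rw [hg, Function.update_self, map_add, aeval_X, hfix', hg', Function.update_self,
        sub_add_cancel]
    · rw [hgj j hj, aeval_X, hgj' j hj]
  have hg'g : ∀ j, aeval g (g' j) = X j := by
    intro j
    rcases eq_or_ne j i0 with rfl | hj
    · rw [hg', Function.update_self, map_sub, aeval_X, hfix, hg, Function.update_self,
        add_sub_cancel_right]
    · rw [hgj' j hj, aeval_X, hgj j hj]
  have hmem := hstab (mkEquiv g g' hgg' hg'g) _ hX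
  rw [mkEquiv_apply, aeval_X, hg, Function.update_self] at hmem
  have h2 := V.sub_mem hmem hX
  rwa [add_sub_cancel_left] at h2

theorem monomial_full_mem (V : Submodule k (MvPolynomial (Fin m) k))
    (hstab : ∀ σ : MvPolynomial (Fin m) k ≃ₐ[k] MvPolynomial (Fin m) k, ∀ v ∈ V, σ v ∈ V)
    {z0 z1 : Fin m} (hz : z0 ≠ z1)
    (havoid : ∀ s : Fin m →₀ ℕ, s z0 = 0 → monomial s (1:k) ∈ V)
    (s : Fin m →₀ ℕ) : monomial s (1:k) ∈ V := by
  set a := s z0 with hadef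
  set b := s z1 with hbdef
  set n := a + b with hn
  set s' : Fin m →₀ ℕ := (s.update z0 0).update z1 n with hs'
  have hs'0 : s' z0 = 0 := by
    rw [hs', Finsupp.coe_update, Function.update_of_ne hz, Finsupp.coe_update,
      Function.update_self]
  have hs'1 : s' z1 = n := by
    rw [hs', Finsupp.coe_update, Function.update_self]
  have hs'j : ∀ j, j ≠ z0 → j ≠ z1 → s' j = s j := by
    intro j hj0 hj1
    rw [hs', Finsupp.coe_update, Function.update_of_ne hj1, Finsupp.coe_update,
      Function.update_of_ne hj0]
  have hbase : monomial s' (1:k) ∈ V := havoid s' hs'0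
  set W : MvPolynomial (Fin m) k := ∏ j ∈ Finset.univ.erase z1, (X j : MvPolynomial (Fin m) k) ^ s' j
    with hW
  set v : ℕ → MvPolynomial (Fin m) k := fun e =>
    ((n.choose (n - e) : k)) • ((X z1 : MvPolynomial (Fin m) k) ^ (n - e) * ((X z0) ^ e * W))
    with hv
  have hexpand : ∀ t : k, aeval (Function.update X z1 (X z1 + C t * X z0)) (monomial s' (1:k))
      = ∑ e ∈ range (n + 1), t ^ e • v e := by
    intro t
    rw [aeval_monomial_univ, map_one, one_mul,
      ← Finset.mul_prod_erase Finset.univ _ (Finset.mem_univ z1), Function.update_self, hs'1]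
    have hWeq : (∏ j ∈ Finset.univ.erase z1,
        (Function.update X z1 (X z1 + C t * X z0) j) ^ s' j) = W := by
      rw [hW]
      refine Finset.prod_congr rfl fun j hj => ?_
      rw [Function.update_of_ne (Finset.mem_erase.mp hj).1]
    rw [hWeq, add_pow, Finset.sum_mul]
    have hterm : ∀ d ∈ range (n + 1),
        (X z1 : MvPolynomial (Fin m) k) ^ d * (C t * X z0) ^ (n - d) * (n.choose d : MvPolynomial (Fin m) k) * W
          = t ^ (n - d) • v (n - d) := by
      intro d hd
      rw [Finset.mem_range] at hd
      have hd' : n - (n - d) = d := by omega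
      rw [hv]
      simp only []
      rw [hd', smul_eq_C_mul, smul_eq_C_mul, mul_pow, ← C_pow, ← C_eq_coe_nat]
      ring
    rw [Finset.sum_congr rfl hterm]
    have := Finset.sum_range_reflect (fun e => t ^ e • v e) (n + 1)
    simpa using this
  have hv_mem : ∀ e, e < n + 1 → v e ∈ V := by
    refine extract V (n+1) v ?_
    intro t _
    rw [← hexpand t]
    set g := Function.update X z1 (X z1 + C t * X z0) with hg
    set g' := Function.update X z1 (X z1 - C t * X z0) with hg'
    have hgg' : ∀ j, aeval g' (g j) = X j := by
      intro j
      rcases eq_or_ne j z1 with rfl | hj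
      · rw [hg, Function.update_self, map_add, map_mul, aeval_X, aeval_X, aeval_C, hg',
          Function.update_self, Function.update_of_ne hz, algebraMap_eq, sub_add_cancel]
      · rw [show g j = X j from Function.update_of_ne hj _ _, aeval_X,
          show g' j = X j from Function.update_of_ne hj _ _]
    have hg'g : ∀ j, aeval g (g' j) = X j := by
      intro j
      rcases eq_or_ne j z1 with rfl | hj
      · rw [hg', Function.update_self, map_sub, map_mul, aeval_X, aeval_X, aeval_C, hg,
          Function.update_self, Function.update_of_ne hz, algebraMap_eq, add_sub_cancel_right]
      · rw [show g' j = X j from Function.update_of_ne hj _ _, aeval_X,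
          show g j = X j from Function.update_of_ne hj _ _]
    exact hstab (mkEquiv g g' hgg' hg'g) _ hbase
  have hva := hv_mem a (by omega)
  have hna : n - a = b := by omega
  have hmono_eq : (X z1 : MvPolynomial (Fin m) k) ^ b * ((X z0) ^ a * W) = monomial s (1:k) := by
    have hW2 : (X z0 : MvPolynomial (Fin m) k) ^ a * W
        = ∏ j ∈ Finset.univ.erase z1, (X j : MvPolynomial (Fin m) k) ^ s j := by
      rw [hW, ← Finset.mul_prod_erase (Finset.univ.erase z1) _
        (Finset.mem_erase.mpr ⟨hz, Finset.mem_univ z0⟩),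
        ← Finset.mul_prod_erase (Finset.univ.erase z1) (fun j => (X j : MvPolynomial (Fin m) k) ^ s j)
        (Finset.mem_erase.mpr ⟨hz, Finset.mem_univ z0⟩), hs'0, pow_zero, one_mul, ← hadef]
      congr 1
      refine Finset.prod_congr rfl fun j hj => ?_
      obtain ⟨hj0, hj1⟩ := Finset.mem_erase.mp hj
      obtain ⟨hj1', _⟩ := Finset.mem_erase.mp hj1
      rw [hs'j j hj0 hj1']
    rw [hW2, monomial_eq_univ, map_one, one_mul,
      ← Finset.mul_prod_erase Finset.univ (fun j => (X j : MvPolynomial (Fin m) k) ^ s j)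
        (Finset.mem_univ z1), ← hbdef]
  have hchoose : ((n.choose b : ℕ) : k) ≠ 0 :=
    Nat.cast_ne_zero.mpr (Nat.choose_pos (by omega)).ne'
  have : monomial s (1:k) = ((n.choose b : ℕ) : k)⁻¹ • v a := by
    rw [hv]
    simp only []
    rw [hna, smul_smul, inv_mul_cancel₀ hchoose, one_smul, hmono_eq]
  rw [this]
  exact V.smul_mem _ hva

end Statement7Aux

/-- Theorem 3.3(1): in characteristic zero, the polynomial ring `k[z₁, …, z_m]` with `m ≥ 2`
has no proper Aut-stable subspaces: any subspace stable under all `k`-algebra automorphisms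
and not contained in `k·1` is the whole ring. -/
theorem statement7 {k : Type*} [Field k] [CharZero k] (m : ℕ) (hm : 2 ≤ m)
    (V : Submodule k (MvPolynomial (Fin m) k))
    (hstab : ∀ σ : MvPolynomial (Fin m) k ≃ₐ[k] MvPolynomial (Fin m) k, ∀ v ∈ V, σ v ∈ V)
    (hV : ¬ V ≤ (1 : Submodule k (MvPolynomial (Fin m) k))) :
    V = ⊤ := by
  classical
  open Statement7Aux in
  obtain ⟨f, hfV, hf1⟩ := SetLike.not_le_iff_exists.mp hV
  obtain ⟨n, hn1, hcn⟩ : ∃ n, 1 ≤ n ∧ MvPolynomial.homogeneousComponent n f ≠ 0 := by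
    by_contra hall; push_neg at hall
    apply hf1
    have hf : f = MvPolynomial.homogeneousComponent 0 f := by
      conv_lhs => rw [← MvPolynomial.sum_homogeneousComponent f]
      rw [Finset.sum_eq_single 0]
      · intro d _ hd; exact hall d (by omega)
      · intro h0; exact absurd (Finset.mem_range.mpr (by omega)) h0
    rw [Submodule.mem_one]
    refine ⟨MvPolynomial.coeff 0 f, ?_⟩
    rw [MvPolynomial.algebraMap_eq, ← MvPolynomial.homogeneousComponent_zero, ← hf]
  have hcompV : MvPolynomial.homogeneousComponent n f ∈ V :=
    Statement7Aux.homogeneousComponent_mem V hstab hfV n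
  have hlin : ∃ ℓ ∈ V, ℓ ≠ 0 ∧ (ℓ : MvPolynomial (Fin m) k).IsHomogeneous 1 := by
    have H : ∀ n : ℕ, ∀ g ∈ V, g ≠ 0 → g.IsHomogeneous n → 1 ≤ n →
        ∃ ℓ ∈ V, ℓ ≠ 0 ∧ (ℓ : MvPolynomial (Fin m) k).IsHomogeneous 1 := by
      intro n
      induction n using Nat.strong_induction_on with
      | _ n ih =>
        intro g hgV hg0 hgh hn
        rcases eq_or_lt_of_le hn with h1 | h2
        · exact ⟨g, hgV, hg0, h1 ▸ hgh⟩
        · obtain ⟨g', hg'V, hg'0, d, hd1, hdn, hg'h⟩ :=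
            Statement7Aux.descent V hstab hgV hg0 hgh h2
          exact ih d hdn g' hg'V hg'0 hg'h hd1
    exact H n _ hcompV hcn (MvPolynomial.homogeneousComponent_isHomogeneous n f) hn1
  obtain ⟨ℓ, hℓV, hℓ0, hℓh⟩ := hlin
  have hX := Statement7Aux.X_mem V hstab hℓV hℓ0 hℓh
  have h0m : 0 < m := by omega
  have h1m : 1 < m := by omega
  have hz : (⟨0, h0m⟩ : Fin m) ≠ ⟨1, h1m⟩ := by
    intro hc
    have := congrArg Fin.val hc
    simp at this
  have havoid : ∀ s : Fin m →₀ ℕ, s ⟨0, h0m⟩ = 0 → MvPolynomial.monomial s (1:k) ∈ V :=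
    fun s hs => Statement7Aux.monomial_avoid_mem V hstab (hX ⟨0, h0m⟩) hs
  have hmono := Statement7Aux.monomial_full_mem V hstab hz havoid
  rw [eq_top_iff]
  intro p _
  have hps : p = ∑ s ∈ p.support, MvPolynomial.coeff s p • MvPolynomial.monomial s (1:k) := by
    conv_lhs => rw [p.as_sum]
    exact Finset.sum_congr rfl fun s _ => by rw [MvPolynomial.smul_monomial, smul_eq_mul, mul_one]
  rw [hps]
  exact Submodule.sum_mem V fun s _ => V.smul_mem _ (hmono s)
end

section
/- Assume char k = 0 and let A = k[z] be the polynomial ring in one variable. Then: (i) every Aut-stable k-subalgebra B of A with B ≠ k·1 equals A; and (ii) every Aut-stable k-subspace V of A that is not contained in k·1 either equals A or is equal to the subspace {p ∈ k[z] : deg p ≤ d} of polynomials of degree at most d, for some integer d ≥ 1. (Theorem 3.3(2).) -/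
open Polynomial

private lemma taylor_coeff_high {k : Type*} [CommRing k] (p : k[X]) (m : ℕ)
    (hm : p.natDegree ≤ m) : (taylor (1:k) p).coeff m = p.coeff m := by
  rw [taylor_coeff, eval_eq_sum_range' (n := 1)
    (lt_of_le_of_lt (natDegree_hasseDeriv_le p m) (by omega)) 1]
  simp [hasseDeriv_coeff]

private lemma key_lemma {k : Type*} [Field k] [CharZero k] (V : Submodule k (Polynomial k))
    (hV : ∀ σ : Polynomial k ≃ₐ[k] Polynomial k, ∀ x ∈ V, σ x ∈ V) :
    ∀ n : ℕ, ∀ p : Polynomial k, p ∈ V → p ≠ 0 → p.natDegree = n →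
      Polynomial.degreeLE k (n : ℕ) ≤ V := by
  intro n
  induction n with
  | zero =>
      intro p hp hp0 hdeg r hr
      rw [mem_degreeLE] at hr
      have hpc : p = C (p.coeff 0) := eq_C_of_natDegree_eq_zero hdeg
      have hrc : r = C (r.coeff 0) := eq_C_of_degree_le_zero (by exact_mod_cast hr)
      have hpc0 : p.coeff 0 ≠ 0 := fun h => hp0 (by rw [hpc, h, map_zero])
      have : r = (r.coeff 0 / p.coeff 0) • p := by
        nth_rewrite 2 [hpc]
        rw [smul_C, smul_eq_mul, div_mul_cancel₀ _ hpc0, ← hrc]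
      rw [this]
      exact V.smul_mem _ hp
  | succ n ih =>
      intro p hp hp0 hdeg
      -- q = p(X+1) - p(X)
      set q : k[X] := taylor (1:k) p - p with hqdef
      have htay : (algEquivAevalXAddC (1:k)) p = taylor 1 p := by
        simp [algEquivAevalXAddC_apply, taylor_apply, comp_eq_aeval]
      have hqV : q ∈ V := V.sub_mem (htay ▸ hV (algEquivAevalXAddC 1) p hp) hp
      have hlead : p.coeff (n+1) ≠ 0 := by
        rw [← hdeg]; exact mt leadingCoeff_eq_zero.mp hp0
      have hcq : q.coeff n = ((n+1 : ℕ) : k) * p.coeff (n+1) := by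
        rw [hqdef, coeff_sub, taylor_coeff, eval_eq_sum_range' (n := 2)
          (lt_of_le_of_lt (natDegree_hasseDeriv_le p n) (by omega)) 1]
        simp only [Finset.sum_range_succ, Finset.sum_range_one, hasseDeriv_coeff,
          Nat.add_comm 1 n, Nat.choose_succ_self_right, Nat.choose_self, zero_add, Nat.zero_add]
        push_cast
        ring
      have hcq0 : q.coeff n ≠ 0 := by
        rw [hcq]
        exact mul_ne_zero (Nat.cast_ne_zero.mpr (Nat.succ_ne_zero n)) hlead
      have hq0 : q ≠ 0 := fun h => hcq0 (by rw [h, coeff_zero])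
      have hqle : q.natDegree ≤ n := by
        rw [Polynomial.natDegree_le_iff_coeff_eq_zero]
        intro m hm
        rw [hqdef, coeff_sub, taylor_coeff_high p m (by omega), sub_self]
      have hqdeg : q.natDegree = n := le_antisymm hqle (le_natDegree_of_ne_zero hcq0)
      have hVn : Polynomial.degreeLE k (n : ℕ) ≤ V := ih q hqV hq0 hqdeg
      intro r hr
      rw [mem_degreeLE] at hr
      set c : k := r.coeff (n+1) / p.coeff (n+1) with hc
      have hr' : r - c • p ∈ Polynomial.degreeLE k (n : ℕ) := by
        rw [mem_degreeLE, degree_le_iff_coeff_zero]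
        intro m hm
        have hm' : n + 1 ≤ m := by exact_mod_cast Nat.add_one_le_iff.mpr (by exact_mod_cast hm)
        rw [coeff_sub, coeff_smul, smul_eq_mul]
        rcases eq_or_lt_of_le hm' with h | h
        · rw [← h, hc, div_mul_cancel₀ _ hlead, sub_self]
        · have h1 : r.coeff m = 0 := by
            rw [degree_le_iff_coeff_zero] at hr
            exact hr m (by exact_mod_cast h)
          have h2 : p.coeff m = 0 := coeff_eq_zero_of_natDegree_lt (by omega)
          rw [h1, h2, mul_zero, sub_zero]
      have : r - c • p ∈ V := hVn hr'
      have := V.add_mem this (V.smul_mem c hp)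
      simpa using this

/-- Theorem 3.3(2): in characteristic zero, `k[z]` has no proper Aut-stable subalgebras, and
every Aut-stable subspace not contained in `k·1` is either all of `k[z]` or the space of
polynomials of degree at most `d` for some `d ≥ 1`. -/
theorem statement8 {k : Type*} [Field k] [CharZero k] :
    (∀ B : Subalgebra k (Polynomial k),
      (∀ σ : Polynomial k ≃ₐ[k] Polynomial k, ∀ x ∈ B, σ x ∈ B) →
      B ≠ ⊥ → B = ⊤) ∧
    (∀ V : Submodule k (Polynomial k),
      (∀ σ : Polynomial k ≃ₐ[k] Polynomial k, ∀ x ∈ V, σ x ∈ V) →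
      ¬ V ≤ (1 : Submodule k (Polynomial k)) →
      V = ⊤ ∨ ∃ d : ℕ, 1 ≤ d ∧ V = Polynomial.degreeLE k (d : ℕ)) := by
  constructor
  · intro B hB hBne
    obtain ⟨p, hpB, hpbot⟩ : ∃ p ∈ B, p ∉ (⊥ : Subalgebra k (Polynomial k)) := by
      by_contra h
      push_neg at h
      exact hBne (le_antisymm h bot_le)
    have hp0 : p ≠ 0 := fun h => hpbot (h ▸ Subalgebra.zero_mem ⊥)
    have hpd : 1 ≤ p.natDegree := by
      by_contra h
      push_neg at h
      obtain ⟨a, ha⟩ := Polynomial.natDegree_eq_zero.mp (Nat.lt_one_iff.mp h)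
      exact hpbot (Algebra.mem_bot.mpr ⟨a, by simpa using ha⟩)
    rw [eq_top_iff]
    intro r _
    set m : ℕ := r.natDegree + 1 with hm
    have hpm : p ^ m ∈ B := pow_mem hpB m
    have hpm0 : p ^ m ≠ 0 := pow_ne_zero m hp0
    have hkey := key_lemma (Subalgebra.toSubmodule B)
      (fun σ x hx => hB σ x hx) ((p ^ m).natDegree) (p ^ m) hpm hpm0 rfl
    refine hkey ?_
    rw [mem_degreeLE]
    refine le_trans (degree_le_natDegree) ?_
    rw [Nat.cast_le, natDegree_pow]
    calc r.natDegree ≤ m := by omega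
      _ ≤ m * p.natDegree := Nat.le_mul_of_pos_right m hpd
  · intro V hV hV1
    obtain ⟨p₀, hp₀V, hp₀1⟩ : ∃ p ∈ V, p ∉ (1 : Submodule k (Polynomial k)) := by
      by_contra h
      push_neg at h
      exact hV1 h
    have hp₀0 : p₀ ≠ 0 := fun h => hp₀1 (h ▸ Submodule.zero_mem 1)
    have hp₀d : 1 ≤ p₀.natDegree := by
      by_contra h
      push_neg at h
      obtain ⟨a, ha⟩ := Polynomial.natDegree_eq_zero.mp (Nat.lt_one_iff.mp h)
      exact hp₀1 (Submodule.mem_one.mpr ⟨a, by simpa using ha⟩)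
    by_cases hbd : ∃ N : ℕ, ∀ q ∈ V, q.natDegree ≤ N
    · right
      obtain ⟨N, hN⟩ := hbd
      set T : Set ℕ := {n | ∃ q ∈ V, q ≠ 0 ∧ q.natDegree = n} with hT
      have hTne : T.Nonempty := ⟨p₀.natDegree, p₀, hp₀V, hp₀0, rfl⟩
      have hTbdd : BddAbove T := ⟨N, fun n ⟨q, hq, _, hqd⟩ => hqd ▸ hN q hq⟩
      set d : ℕ := sSup T with hd
      obtain ⟨q, hqV, hq0, hqd⟩ : d ∈ T := Nat.sSup_mem hTne hTbdd
      have hd1 : 1 ≤ d := le_trans hp₀d (le_csSup hTbdd ⟨p₀, hp₀V, hp₀0, rfl⟩)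
      refine ⟨d, hd1, le_antisymm ?_ (key_lemma V hV d q hqV hq0 hqd)⟩
      intro r hrV
      rw [mem_degreeLE]
      rcases eq_or_ne r 0 with h | h
      · simp [h]
      · refine le_trans degree_le_natDegree ?_
        rw [Nat.cast_le]
        exact le_csSup hTbdd ⟨r, hrV, h, rfl⟩
    · left
      push_neg at hbd
      rw [eq_top_iff]
      intro r _
      obtain ⟨q, hqV, hqd⟩ := hbd r.natDegree
      have hq0 : q ≠ 0 := by rintro rfl; rw [natDegree_zero] at hqd; omega
      refine key_lemma V hV q.natDegree q hqV hq0 rfl ?_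
      rw [mem_degreeLE]
      exact le_trans degree_le_natDegree (by exact_mod_cast hqd.le)
end

section
/- Let A and B be k-algebras, let F be an ℕ-filtration of A and G an ℕ-filtration of B, and define H_i = Σ_{j=0}^{i} F_j ⊗ G_{i−j} ⊆ A ⊗ B for each i ∈ ℕ. Then: (1) H = (H_i) is an ℕ-filtration of A ⊗ B; (2) gr_H(A ⊗ B) ≅ gr_F(A) ⊗ gr_G(B) as graded k-algebras; (3) if F is a good filtration and G is a firm filtration, then H is a good filtration; and (4) if both F and G are firm filtrations, then H is a firm filtration. (Lemma 1.2.) -/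
open scoped TensorProduct ENNReal

universe u v

variable (k : Type v) [Field k]

/-- An ℕ-filtration of a `k`-algebra `A`: an ascending chain of `k`-subspaces
`F 0 ⊆ F 1 ⊆ ⋯` with `k·1 ⊆ F 0`, `⋃ᵢ F i = A` and `F i * F j ⊆ F (i + j)`. -/
structure AlgFiltration (A : Type u) [Ring A] [Algebra k A] where
  F : ℕ → Submodule k A
  one_mem : (1 : A) ∈ F 0
  mono : ∀ i, F i ≤ F (i + 1)
  exhaustive : ∀ a : A, ∃ i, a ∈ F i
  mul_mem : ∀ i j : ℕ, ∀ x ∈ F i, ∀ y ∈ F j, x * y ∈ F (i + j)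

namespace AlgFiltration

variable {k} {A : Type u} [Ring A] [Algebra k A] (𝓕 : AlgFiltration k A)

/-- The Rees algebra `⊕ᵢ (F i) Xⁱ ⊆ A[X]` of a filtration. -/
def rees : Subalgebra k (Polynomial A) where
  carrier := {p | ∀ i, p.coeff i ∈ 𝓕.F i}
  add_mem' := fun hp hq i => by
    simpa using (𝓕.F i).add_mem (hp i) (hq i)
  mul_mem' := fun {p q} hp hq i => by
    show (p * q).coeff i ∈ 𝓕.F i
    rw [Polynomial.coeff_mul]
    refine Submodule.sum_mem _ fun x hx => ?_
    have h := 𝓕.mul_mem x.1 x.2 _ (hp x.1) _ (hq x.2)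
    have hx' : x.1 + x.2 = i := by simpa using hx
    rwa [hx'] at h
  algebraMap_mem' := fun c i => by
    rcases i with _ | i
    · simpa [Polynomial.algebraMap_apply, Algebra.algebraMap_eq_smul_one] using
        (𝓕.F 0).smul_mem c 𝓕.one_mem
    · simp [Polynomial.algebraMap_apply]

/-- The element `X` of the Rees algebra. -/
noncomputable def xElem : 𝓕.rees :=
  ⟨Polynomial.X, fun i => by
    rcases i with _ | _ | i
    · simp
    · simpa [Polynomial.coeff_X] using 𝓕.mono 0 𝓕.one_mem
    · simp [Polynomial.coeff_X]⟩

/-- The associated graded algebra `gr_F(A) = ⊕ᵢ F i / F (i-1)` of a filtration, realized as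
the Rees algebra modulo the two-sided ideal generated by the central element `X`. -/
def gr : Type u := RingQuot (fun a b : 𝓕.rees => a = 𝓕.xElem ∧ b = 0)

noncomputable instance : Ring 𝓕.gr :=
  inferInstanceAs (Ring (RingQuot (fun a b : 𝓕.rees => a = 𝓕.xElem ∧ b = 0)))

noncomputable instance : Algebra k 𝓕.gr :=
  inferInstanceAs (Algebra k (RingQuot (fun a b : 𝓕.rees => a = 𝓕.xElem ∧ b = 0)))

/-- The `k`-linear map sending `a ∈ F i` to the monomial `a Xⁱ` in the Rees algebra. -/
noncomputable def monoMap (i : ℕ) : 𝓕.F i →ₗ[k] 𝓕.rees where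
  toFun a :=
    ⟨Polynomial.monomial i (a : A), fun j => by
      rcases eq_or_ne j i with rfl | h
      · simp only [Polynomial.coeff_monomial, if_pos rfl]
        exact a.2
      · simp [Polynomial.coeff_monomial, h, Ne.symm h]⟩
  map_add' a b := by
    ext
    simp
  map_smul' c a := by
    ext
    simp

/-- The canonical projection from the Rees algebra onto the associated graded algebra. -/
noncomputable def grProj : 𝓕.rees →ₐ[k] 𝓕.gr :=
  RingQuot.mkAlgHom k (fun a b : 𝓕.rees => a = 𝓕.xElem ∧ b = 0)

/-- The degree-`i` homogeneous component `F i / F (i-1)` of the associated graded algebra,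
realized as the image of `(F i) Xⁱ` under the projection. -/
noncomputable def grPiece (i : ℕ) : Submodule k 𝓕.gr :=
  LinearMap.range (𝓕.grProj.toLinearMap ∘ₗ 𝓕.monoMap i)

end AlgFiltration

/-- A `k`-algebra `A` is a firm domain if `A ⊗[k] B` is a domain for every `k`-algebra `B`
which is a domain. -/
def IsFirmDomain (A : Type u) [Ring A] [Algebra k A] : Prop :=
  ∀ (B : Type u) [Ring B] [Algebra k B], IsDomain B → IsDomain (A ⊗[k] B)

/-- A filtration is good if its associated graded algebra is a domain.
`uGood k A` is the subspace of universally degree-`0` elements with respect to good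
ℕ-filtrations: the intersection of `F 0` over all good ℕ-filtrations of `A`. -/
noncomputable def uGood (A : Type u) [Ring A] [Algebra k A] : Submodule k A :=
  ⨅ (𝓕 : AlgFiltration k A) (_ : IsDomain 𝓕.gr), 𝓕.F 0

/-- A filtration is firm if its associated graded algebra is a firm domain.
`uFirm k A` is the intersection of `F 0` over all firm ℕ-filtrations of `A`. -/
noncomputable def uFirm (A : Type u) [Ring A] [Algebra k A] : Submodule k A :=
  ⨅ (𝓕 : AlgFiltration k A) (_ : IsFirmDomain k 𝓕.gr), 𝓕.F 0

/-- The Gelfand–Kirillov dimension of a `k`-algebra `A`: the supremum, over all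
finite-dimensional subspaces `V ⊆ A` containing `1`, of `limsup_n log(dim Vⁿ)/log n`. -/
noncomputable def GKdim (A : Type u) [Ring A] [Algebra k A] : ℝ≥0∞ :=
  ⨆ (V : Submodule k A) (_ : (1 : A) ∈ V) (_ : FiniteDimensional k V),
    Filter.limsup
      (fun n : ℕ => ENNReal.ofReal (Real.log (Module.finrank k ↥(V ^ n)) / Real.log n))
      Filter.atTop

/-- `R` is GKdim-additive if it has finite GK-dimension and
`GKdim (A ⊗ R) = GKdim A + GKdim R` for every `k`-algebra `A`. -/
def IsGKAdditive (R : Type u) [Ring R] [Algebra k R] : Prop :=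
  GKdim k R < ⊤ ∧
    ∀ (A : Type u) [Ring A] [Algebra k A], GKdim k (A ⊗[k] R) = GKdim k A + GKdim k R

/-- Membership in the family `𝓡₁` of GKdim-additive firm domains `R` with `u_firm(R) = k·1`. -/
def InR1 (R : Type u) [Ring R] [Algebra k R] : Prop :=
  IsGKAdditive k R ∧ IsFirmDomain k R ∧ uFirm k R = 1

/-- Membership in the family `𝓡₂` of GKdim-additive domains `R` with `u_good(R) = k·1`. -/
def InR2 (R : Type u) [Ring R] [Algebra k R] : Prop :=
  IsGKAdditive k R ∧ IsDomain R ∧ uGood k R = 1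

/-- The canonical image of `P ⊗ Q` in `M ⊗[k] N`, for subspaces `P ⊆ M` and `Q ⊆ N`. -/
def tensorSub {M N : Type u} [Ring M] [Ring N] [Algebra k M] [Algebra k N]
    (P : Submodule k M) (Q : Submodule k N) : Submodule k (M ⊗[k] N) :=
  Submodule.span k {z | ∃ x ∈ P, ∃ y ∈ Q, z = x ⊗ₜ[k] y}


set_option maxHeartbeats 1000000

noncomputable section S13Aux

namespace S13

open Polynomial

variable {k : Type v} [Field k]

section one

variable {A : Type u} [Ring A] [Algebra k A] (𝓕 : AlgFiltration k A)

theorem F_mono : Monotone 𝓕.F := monotone_nat_of_le_succ 𝓕.mono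

/-- The defining relation of `gr`. -/
abbrev grRel : 𝓕.rees → 𝓕.rees → Prop := fun a b => a = 𝓕.xElem ∧ b = 0

theorem grProj_def : 𝓕.grProj = RingQuot.mkAlgHom k (grRel 𝓕) := rfl

theorem monoMap_val (i : ℕ) (a : 𝓕.F i) :
    ((𝓕.monoMap i a : 𝓕.rees) : Polynomial A) = Polynomial.monomial i (a : A) := rfl

/-- The symbol map `F i → gr`. -/
def sigma (i : ℕ) : 𝓕.F i →ₗ[k] 𝓕.gr := 𝓕.grProj.toLinearMap ∘ₗ 𝓕.monoMap i

theorem grPiece_eq (i : ℕ) : 𝓕.grPiece i = LinearMap.range (sigma 𝓕 i) := rfl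

theorem sigma_apply (i : ℕ) (a : 𝓕.F i) : sigma 𝓕 i a = 𝓕.grProj (𝓕.monoMap i a) := rfl

theorem grProj_surjective : Function.Surjective 𝓕.grProj :=
  RingQuot.mkAlgHom_surjective k _

theorem grProj_xElem : 𝓕.grProj 𝓕.xElem = 0 := by
  have h := RingQuot.mkAlgHom_rel (S := k) (s := grRel 𝓕) (x := 𝓕.xElem) (y := 0) ⟨rfl, rfl⟩
  rw [grProj_def]
  exact h.trans (map_zero _)

theorem sigma_succ_eq_zero {i : ℕ} (a : A) (h1 : a ∈ 𝓕.F (i + 1)) (h0 : a ∈ 𝓕.F i) :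
    sigma 𝓕 (i + 1) ⟨a, h1⟩ = 0 := by
  have key : (𝓕.monoMap (i + 1) ⟨a, h1⟩ : 𝓕.rees) = 𝓕.xElem * 𝓕.monoMap i ⟨a, h0⟩ := by
    apply Subtype.ext
    show Polynomial.monomial (i + 1) a = Polynomial.X * Polynomial.monomial i a
    rw [← Polynomial.monomial_one_one_eq_X, Polynomial.monomial_mul_monomial, one_mul,
      Nat.add_comm 1 i]
  rw [sigma_apply, key, map_mul, grProj_xElem, zero_mul]

/-- A projection of `A` onto `F i`. -/
def projF (i : ℕ) : A →ₗ[k] 𝓕.F i :=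
  Submodule.linearProjOfIsCompl _ _ ((𝓕.F i).exists_isCompl.choose_spec)

/-- The symbol map extended to all of `A` (by an arbitrary projection). -/
def chi (i : ℕ) : A →ₗ[k] 𝓕.gr := sigma 𝓕 i ∘ₗ projF 𝓕 i

theorem chi_apply {i : ℕ} {a : A} (ha : a ∈ 𝓕.F i) : chi 𝓕 i a = sigma 𝓕 i ⟨a, ha⟩ := by
  have h : projF 𝓕 i a = ⟨a, ha⟩ :=
    Submodule.linearProjOfIsCompl_apply_left ((𝓕.F i).exists_isCompl.choose_spec) ⟨a, ha⟩
  show sigma 𝓕 i (projF 𝓕 i a) = _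
  rw [h]

theorem chi_eq_zero {i i' : ℕ} {a : A} (ha : a ∈ 𝓕.F i) (h : i < i') : chi 𝓕 i' a = 0 := by
  obtain ⟨m, rfl⟩ : ∃ m, i' = m + 1 := ⟨i' - 1, by omega⟩
  have h1 : a ∈ 𝓕.F (m + 1) := F_mono 𝓕 (by omega) ha
  have h0 : a ∈ 𝓕.F m := F_mono 𝓕 (by omega) ha
  rw [chi_apply 𝓕 h1, sigma_succ_eq_zero 𝓕 a h1 h0]

theorem rees_decomp (p : 𝓕.rees) :
    p = ∑ n ∈ (p : Polynomial A).support, 𝓕.monoMap n ⟨(p : Polynomial A).coeff n, p.2 n⟩ := by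
  apply Subtype.ext
  have h : ((∑ n ∈ (p : Polynomial A).support,
        𝓕.monoMap n ⟨(p : Polynomial A).coeff n, p.2 n⟩ : 𝓕.rees) : Polynomial A)
      = ∑ n ∈ (p : Polynomial A).support,
          Polynomial.monomial n ((p : Polynomial A).coeff n) := by
    rw [AddSubmonoidClass.coe_finset_sum]
    exact Finset.sum_congr rfl fun n _ => rfl
  rw [h]
  exact Polynomial.as_sum_support _

end one

section two

variable {A B : Type u} [Ring A] [Algebra k A] [Ring B] [Algebra k B]
variable (𝓕 : AlgFiltration k A) (𝓖 : AlgFiltration k B)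

/-- The tensor product filtration. -/
def HF (i : ℕ) : Submodule k (A ⊗[k] B) :=
  ⨆ j ∈ Finset.range (i + 1), tensorSub k (𝓕.F j) (𝓖.F (i - j))

theorem tmul_mem_HF {p q i : ℕ} (hpq : p + q ≤ i) {a : A} {b : B}
    (ha : a ∈ 𝓕.F p) (hb : b ∈ 𝓖.F q) : a ⊗ₜ[k] b ∈ HF 𝓕 𝓖 i := by
  have h1 : a ⊗ₜ[k] b ∈ tensorSub k (𝓕.F p) (𝓖.F (i - p)) :=
    Submodule.subset_span ⟨a, ha, b, F_mono 𝓖 (by omega) hb, rfl⟩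
  exact Submodule.mem_iSup_of_mem p
    (Submodule.mem_iSup_of_mem (Finset.mem_range.mpr (by omega)) h1)

/-- Generating set for `HF`. -/
def TS (i : ℕ) : Set (A ⊗[k] B) :=
  {z | ∃ p q, p + q ≤ i ∧ ∃ a ∈ 𝓕.F p, ∃ b ∈ 𝓖.F q, z = a ⊗ₜ[k] b}

theorem HF_eq_span (i : ℕ) : HF 𝓕 𝓖 i = Submodule.span k (TS 𝓕 𝓖 i) := by
  refine le_antisymm (iSup₂_le fun j hj => Submodule.span_le.mpr ?_) (Submodule.span_le.mpr ?_)
  · rintro z ⟨a, ha, b, hb, rfl⟩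
    have hj' := Finset.mem_range.mp hj
    exact Submodule.subset_span ⟨j, i - j, by omega, a, ha, b, hb, rfl⟩
  · rintro z ⟨p, q, hpq, a, ha, b, hb, rfl⟩
    exact tmul_mem_HF 𝓕 𝓖 hpq ha hb

theorem HF_mono {i j : ℕ} (h : i ≤ j) : HF 𝓕 𝓖 i ≤ HF 𝓕 𝓖 j := by
  rw [HF_eq_span, Submodule.span_le]
  rintro z ⟨p, q, hpq, a, ha, b, hb, rfl⟩
  exact tmul_mem_HF 𝓕 𝓖 (by omega) ha hb

theorem one_mem_HF : (1 : A ⊗[k] B) ∈ HF 𝓕 𝓖 0 := by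
  rw [Algebra.TensorProduct.one_def]
  exact tmul_mem_HF 𝓕 𝓖 (by omega) 𝓕.one_mem 𝓖.one_mem

theorem exhaustive_HF (z : A ⊗[k] B) : ∃ i, z ∈ HF 𝓕 𝓖 i := by
  induction z using TensorProduct.induction_on with
  | zero => exact ⟨0, (HF 𝓕 𝓖 0).zero_mem⟩
  | tmul a b =>
    obtain ⟨i, hi⟩ := 𝓕.exhaustive a
    obtain ⟨j, hj⟩ := 𝓖.exhaustive b
    exact ⟨i + j, tmul_mem_HF 𝓕 𝓖 (by omega) hi hj⟩
  | add x y hx hy =>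
    obtain ⟨i, hi⟩ := hx
    obtain ⟨j, hj⟩ := hy
    exact ⟨max i j, (HF 𝓕 𝓖 _).add_mem (HF_mono 𝓕 𝓖 (le_max_left _ _) hi)
      (HF_mono 𝓕 𝓖 (le_max_right _ _) hj)⟩

theorem mul_mem_HF (i j : ℕ) (x : A ⊗[k] B) (hx : x ∈ HF 𝓕 𝓖 i)
    (y : A ⊗[k] B) (hy : y ∈ HF 𝓕 𝓖 j) : x * y ∈ HF 𝓕 𝓖 (i + j) := by
  rw [HF_eq_span] at hx hy
  induction hx using Submodule.span_induction with
  | mem x hmem =>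
    obtain ⟨p, q, hpq, a, ha, b, hb, rfl⟩ := hmem
    induction hy using Submodule.span_induction with
    | mem y hmem' =>
      obtain ⟨p', q', hpq', c, hc, d, hd, rfl⟩ := hmem'
      rw [Algebra.TensorProduct.tmul_mul_tmul]
      exact tmul_mem_HF 𝓕 𝓖 (by omega) (𝓕.mul_mem p p' a ha c hc) (𝓖.mul_mem q q' b hb d hd)
    | zero => rw [mul_zero]; exact (HF 𝓕 𝓖 _).zero_mem
    | add u v hu hv ihu ihv => rw [mul_add]; exact (HF 𝓕 𝓖 _).add_mem ihu ihv
    | smul c u hu ihu => rw [mul_smul_comm]; exact (HF 𝓕 𝓖 _).smul_mem c ihu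
  | zero => rw [zero_mul]; exact (HF 𝓕 𝓖 _).zero_mem
  | add u v hu hv ihu ihv => rw [add_mul]; exact (HF 𝓕 𝓖 _).add_mem ihu ihv
  | smul c u hu ihu => rw [smul_mul_assoc]; exact (HF 𝓕 𝓖 _).smul_mem c ihu

/-- The tensor product filtration, as an `AlgFiltration`. -/
def HFil : AlgFiltration k (A ⊗[k] B) where
  F := HF 𝓕 𝓖
  one_mem := one_mem_HF 𝓕 𝓖
  mono i := HF_mono 𝓕 𝓖 (Nat.le_succ i)
  exhaustive := exhaustive_HF 𝓕 𝓖
  mul_mem := mul_mem_HF 𝓕 𝓖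

theorem HFil_F (i : ℕ) : (HFil 𝓕 𝓖).F i = HF 𝓕 𝓖 i := rfl

/-- The left inclusion `A → A ⊗ B` as a ring hom. -/
def inlH : A →+* A ⊗[k] B :=
  (Algebra.TensorProduct.includeLeft : A →ₐ[k] A ⊗[k] B).toRingHom

/-- The right inclusion `B → A ⊗ B` as a ring hom. -/
def inrH : B →+* A ⊗[k] B :=
  (Algebra.TensorProduct.includeRight : B →ₐ[k] A ⊗[k] B).toRingHom

theorem inlH_apply (a : A) : inlH (k := k) (B := B) a = a ⊗ₜ[k] 1 := rfl

theorem inrH_apply (b : B) : inrH (k := k) (A := A) b = (1 : A) ⊗ₜ[k] b := rfl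

/-- The induced map on Rees algebras from the left factor. -/
def reesL : 𝓕.rees →ₐ[k] (HFil 𝓕 𝓖).rees :=
  ((Polynomial.mapAlgHom (Algebra.TensorProduct.includeLeft : A →ₐ[k] A ⊗[k] B)).comp
    𝓕.rees.val).codRestrict (HFil 𝓕 𝓖).rees (fun p => by
      show ∀ i, (((p : Polynomial A)).map (inlH (k := k) (B := B))).coeff i ∈ (HFil 𝓕 𝓖).F i
      intro i
      rw [Polynomial.coeff_map, inlH_apply]
      exact tmul_mem_HF 𝓕 𝓖 (by omega) (p.2 i) 𝓖.one_mem)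

/-- The induced map on Rees algebras from the right factor. -/
def reesR : 𝓖.rees →ₐ[k] (HFil 𝓕 𝓖).rees :=
  ((Polynomial.mapAlgHom (Algebra.TensorProduct.includeRight : B →ₐ[k] A ⊗[k] B)).comp
    𝓖.rees.val).codRestrict (HFil 𝓕 𝓖).rees (fun q => by
      show ∀ i, (((q : Polynomial B)).map (inrH (k := k) (A := A))).coeff i ∈ (HFil 𝓕 𝓖).F i
      intro i
      rw [Polynomial.coeff_map, inrH_apply]
      exact tmul_mem_HF 𝓕 𝓖 (by omega) 𝓕.one_mem (q.2 i))

theorem reesL_val (p : 𝓕.rees) :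
    ((reesL 𝓕 𝓖 p : (HFil 𝓕 𝓖).rees) : Polynomial (A ⊗[k] B))
      = (p : Polynomial A).map (inlH (k := k) (B := B)) := rfl

theorem reesR_val (q : 𝓖.rees) :
    ((reesR 𝓕 𝓖 q : (HFil 𝓕 𝓖).rees) : Polynomial (A ⊗[k] B))
      = (q : Polynomial B).map (inrH (k := k) (A := A)) := rfl

theorem reesL_xElem : reesL 𝓕 𝓖 𝓕.xElem = (HFil 𝓕 𝓖).xElem := by
  apply Subtype.ext
  rw [reesL_val]
  show (Polynomial.X : Polynomial A).map _ = Polynomial.X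
  rw [Polynomial.map_X]

theorem reesR_xElem : reesR 𝓕 𝓖 𝓖.xElem = (HFil 𝓕 𝓖).xElem := by
  apply Subtype.ext
  rw [reesR_val]
  show (Polynomial.X : Polynomial B).map _ = Polynomial.X
  rw [Polynomial.map_X]

/-- The left map `gr_F(A) → gr_H(A ⊗ B)`. -/
def phi1 : 𝓕.gr →ₐ[k] (HFil 𝓕 𝓖).gr :=
  RingQuot.liftAlgHom k ⟨((HFil 𝓕 𝓖).grProj).comp (reesL 𝓕 𝓖), by
    rintro x y ⟨rfl, rfl⟩
    show (HFil 𝓕 𝓖).grProj (reesL 𝓕 𝓖 𝓕.xElem) = (HFil 𝓕 𝓖).grProj (reesL 𝓕 𝓖 0)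
    rw [reesL_xElem, grProj_xElem, map_zero, map_zero]⟩

/-- The right map `gr_G(B) → gr_H(A ⊗ B)`. -/
def phi2 : 𝓖.gr →ₐ[k] (HFil 𝓕 𝓖).gr :=
  RingQuot.liftAlgHom k ⟨((HFil 𝓕 𝓖).grProj).comp (reesR 𝓕 𝓖), by
    rintro x y ⟨rfl, rfl⟩
    show (HFil 𝓕 𝓖).grProj (reesR 𝓕 𝓖 𝓖.xElem) = (HFil 𝓕 𝓖).grProj (reesR 𝓕 𝓖 0)
    rw [reesR_xElem, grProj_xElem, map_zero, map_zero]⟩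

theorem phi1_mk (p : 𝓕.rees) :
    phi1 𝓕 𝓖 (𝓕.grProj p) = (HFil 𝓕 𝓖).grProj (reesL 𝓕 𝓖 p) :=
  RingQuot.liftAlgHom_mkAlgHom_apply _ _ _ _

theorem phi2_mk (q : 𝓖.rees) :
    phi2 𝓕 𝓖 (𝓖.grProj q) = (HFil 𝓕 𝓖).grProj (reesR 𝓕 𝓖 q) :=
  RingQuot.liftAlgHom_mkAlgHom_apply _ _ _ _

theorem polyComm {A' B' C : Type*} [Semiring A'] [Semiring B'] [Semiring C]
    (f : A' →+* C) (g : B' →+* C) (hfg : ∀ a b, Commute (f a) (g b))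
    (p : Polynomial A') (q : Polynomial B') :
    p.map f * q.map g = q.map g * p.map f := by
  induction p using Polynomial.induction_on' with
  | add p1 p2 h1 h2 => simp only [Polynomial.map_add, add_mul, mul_add, h1, h2]
  | monomial n a =>
    induction q using Polynomial.induction_on' with
    | add q1 q2 g1 g2 => simp only [Polynomial.map_add, add_mul, mul_add, g1, g2]
    | monomial m b =>
      rw [Polynomial.map_monomial, Polynomial.map_monomial,
        Polynomial.monomial_mul_monomial, Polynomial.monomial_mul_monomial,
        (hfg a b).eq, Nat.add_comm n m]

theorem phiComm : ∀ x y, Commute (phi1 𝓕 𝓖 x) (phi2 𝓕 𝓖 y) := by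
  intro x y
  obtain ⟨p, rfl⟩ := grProj_surjective 𝓕 x
  obtain ⟨q, rfl⟩ := grProj_surjective 𝓖 y
  rw [phi1_mk, phi2_mk]
  have hc : Commute (reesL 𝓕 𝓖 p) (reesR 𝓕 𝓖 q) := by
    show reesL 𝓕 𝓖 p * reesR 𝓕 𝓖 q = reesR 𝓕 𝓖 q * reesL 𝓕 𝓖 p
    apply Subtype.ext
    rw [MulMemClass.coe_mul, MulMemClass.coe_mul, reesL_val, reesR_val]
    refine polyComm _ _ (fun a b => ?_) _ _
    show a ⊗ₜ[k] (1 : B) * (1 : A) ⊗ₜ[k] b = (1 : A) ⊗ₜ[k] b * a ⊗ₜ[k] (1 : B)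
    rw [Algebra.TensorProduct.tmul_mul_tmul, Algebra.TensorProduct.tmul_mul_tmul,
      one_mul, mul_one, one_mul, mul_one]
  exact hc.map (HFil 𝓕 𝓖).grProj

/-- The canonical map `gr_F(A) ⊗ gr_G(B) → gr_H(A ⊗ B)`. -/
def Phi : (𝓕.gr ⊗[k] 𝓖.gr) →ₐ[k] (HFil 𝓕 𝓖).gr :=
  Algebra.TensorProduct.lift (phi1 𝓕 𝓖) (phi2 𝓕 𝓖) (phiComm 𝓕 𝓖)

theorem Phi_tmul (x : 𝓕.gr) (y : 𝓖.gr) :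
    Phi 𝓕 𝓖 (x ⊗ₜ[k] y) = phi1 𝓕 𝓖 x * phi2 𝓕 𝓖 y :=
  Algebra.TensorProduct.lift_tmul _ _ _ _ _

theorem Phi_sigma_tmul {i j n : ℕ} (h : i + j = n) (a : A) (ha : a ∈ 𝓕.F i)
    (b : B) (hb : b ∈ 𝓖.F j) (hab : a ⊗ₜ[k] b ∈ (HFil 𝓕 𝓖).F n) :
    Phi 𝓕 𝓖 (sigma 𝓕 i ⟨a, ha⟩ ⊗ₜ[k] sigma 𝓖 j ⟨b, hb⟩)
      = sigma (HFil 𝓕 𝓖) n ⟨a ⊗ₜ[k] b, hab⟩ := by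
  rw [Phi_tmul, sigma_apply, sigma_apply, sigma_apply, phi1_mk, phi2_mk, ← map_mul]
  congr 1
  apply Subtype.ext
  rw [MulMemClass.coe_mul, reesL_val, reesR_val, monoMap_val, monoMap_val, monoMap_val,
    Polynomial.map_monomial, Polynomial.map_monomial, Polynomial.monomial_mul_monomial, h,
    inlH_apply, inrH_apply, Algebra.TensorProduct.tmul_mul_tmul, one_mul, mul_one]

/-- The degree-`n` "total symbol" map on `A ⊗ B`. -/
def tmap (n : ℕ) : (A ⊗[k] B) →ₗ[k] (𝓕.gr ⊗[k] 𝓖.gr) :=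
  ∑ ij ∈ Finset.HasAntidiagonal.antidiagonal n, TensorProduct.map (chi 𝓕 ij.1) (chi 𝓖 ij.2)

theorem tmap_tmul (n : ℕ) (a : A) (b : B) :
    tmap 𝓕 𝓖 n (a ⊗ₜ[k] b)
      = ∑ ij ∈ Finset.HasAntidiagonal.antidiagonal n, chi 𝓕 ij.1 a ⊗ₜ[k] chi 𝓖 ij.2 b := by
  rw [tmap, LinearMap.sum_apply]
  exact Finset.sum_congr rfl fun ij _ => TensorProduct.map_tmul _ _ _ _

theorem tmap_spec {i j : ℕ} {a : A} (ha : a ∈ 𝓕.F i) {b : B} (hb : b ∈ 𝓖.F j) :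
    tmap 𝓕 𝓖 (i + j) (a ⊗ₜ[k] b) = sigma 𝓕 i ⟨a, ha⟩ ⊗ₜ[k] sigma 𝓖 j ⟨b, hb⟩ := by
  rw [tmap_tmul, Finset.sum_eq_single (i, j)]
  · rw [chi_apply 𝓕 ha, chi_apply 𝓖 hb]
  · rintro ⟨i', j'⟩ hmem hne
    rw [Finset.HasAntidiagonal.mem_antidiagonal] at hmem
    have h : i < i' ∨ j < j' := by
      rcases Nat.lt_or_ge i i' with h' | h'
      · exact Or.inl h'
      · refine Or.inr ?_
        have : i' ≠ i ∨ j' ≠ j := by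
          by_contra hc
          push_neg at hc
          exact hne (Prod.ext hc.1 hc.2)
        omega
    rcases h with h' | h'
    · rw [chi_eq_zero 𝓕 ha h', TensorProduct.zero_tmul]
    · rw [chi_eq_zero 𝓖 hb h', TensorProduct.tmul_zero]
  · intro hni
    have hmm : (i, j) ∈ Finset.HasAntidiagonal.antidiagonal (i + j) := Finset.HasAntidiagonal.mem_antidiagonal.mpr rfl
    exact absurd hmm hni

theorem tmap_vanish {m n : ℕ} (h : m < n) {z : A ⊗[k] B} (hz : z ∈ HF 𝓕 𝓖 m) :
    tmap 𝓕 𝓖 n z = 0 := by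
  rw [HF_eq_span] at hz
  induction hz using Submodule.span_induction with
  | mem z hmem =>
    obtain ⟨p, q, hpq, a, ha, b, hb, rfl⟩ := hmem
    rw [tmap_tmul]
    apply Finset.sum_eq_zero
    rintro ⟨i', j'⟩ hmem'
    rw [Finset.HasAntidiagonal.mem_antidiagonal] at hmem'
    have h' : p < i' ∨ q < j' := by omega
    rcases h' with h' | h'
    · rw [chi_eq_zero 𝓕 ha h', TensorProduct.zero_tmul]
    · rw [chi_eq_zero 𝓖 hb h', TensorProduct.tmul_zero]
  | zero => rw [map_zero]
  | add u v hu hv ihu ihv => rw [map_add, ihu, ihv, add_zero]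
  | smul c u hu ihu => rw [map_smul, ihu, smul_zero]

/-- `Polynomial.toFinsupp` as a linear map. -/
def toFinsuppL : Polynomial (A ⊗[k] B) →ₗ[k] (ℕ →₀ (A ⊗[k] B)) where
  toFun p := p.toFinsupp.coeff
  map_add' p q := by rw [Polynomial.toFinsupp_add]; rfl
  map_smul' c p := by rw [Polynomial.toFinsupp_smul]; rfl

/-- The total symbol map on the Rees algebra (indeed on all polynomials). -/
def Smap : Polynomial (A ⊗[k] B) →ₗ[k] (𝓕.gr ⊗[k] 𝓖.gr) :=
  (Finsupp.lsum k fun n => tmap 𝓕 𝓖 n) ∘ₗ toFinsuppL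

theorem Smap_monomial (n : ℕ) (c : A ⊗[k] B) :
    Smap 𝓕 𝓖 (Polynomial.monomial n c) = tmap 𝓕 𝓖 n c := by
  rw [Smap, LinearMap.comp_apply]
  show (Finsupp.lsum k fun n => tmap 𝓕 𝓖 n) (Polynomial.monomial n c).toFinsupp.coeff = _
  rw [Polynomial.toFinsupp_monomial, AddMonoidAlgebra.coeff_single, Finsupp.lsum_single]

theorem Smap_sum (p : Polynomial (A ⊗[k] B)) :
    Smap 𝓕 𝓖 p = ∑ n ∈ p.support, tmap 𝓕 𝓖 n (p.coeff n) := by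
  rw [Smap, LinearMap.comp_apply]
  show (Finsupp.lsum k fun n => tmap 𝓕 𝓖 n) p.toFinsupp.coeff = _
  rw [Finsupp.lsum_apply]
  rfl

/-- Membership in the "ideal" `X · Rees`: all coefficients drop one filtration degree. -/
def lowered (p : (HFil 𝓕 𝓖).rees) : Prop :=
  (p : Polynomial (A ⊗[k] B)).coeff 0 = 0 ∧
    ∀ n, (p : Polynomial (A ⊗[k] B)).coeff (n + 1) ∈ HF 𝓕 𝓖 n

theorem lowered_mul_right (p c : (HFil 𝓕 𝓖).rees) (h : lowered 𝓕 𝓖 p) :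
    lowered 𝓕 𝓖 (p * c) := by
  constructor
  · rw [MulMemClass.coe_mul, Polynomial.mul_coeff_zero, h.1, zero_mul]
  · intro n
    rw [MulMemClass.coe_mul, Polynomial.coeff_mul]
    apply Submodule.sum_mem
    rintro ⟨i, j⟩ hij
    rw [Finset.HasAntidiagonal.mem_antidiagonal] at hij
    rcases i with _ | i'
    · rw [h.1, zero_mul]
      exact (HF 𝓕 𝓖 n).zero_mem
    · have hmem := mul_mem_HF 𝓕 𝓖 i' j _ (h.2 i') _ (c.2 j)
      have heq : i' + j = n := by omega
      rw [heq] at hmem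
      exact hmem
  
theorem lowered_mul_left (p c : (HFil 𝓕 𝓖).rees) (h : lowered 𝓕 𝓖 p) :
    lowered 𝓕 𝓖 (c * p) := by
  constructor
  · rw [MulMemClass.coe_mul, Polynomial.mul_coeff_zero, h.1, mul_zero]
  · intro n
    rw [MulMemClass.coe_mul, Polynomial.coeff_mul]
    apply Submodule.sum_mem
    rintro ⟨i, j⟩ hij
    rw [Finset.HasAntidiagonal.mem_antidiagonal] at hij
    rcases j with _ | j'
    · rw [h.1, mul_zero]
      exact (HF 𝓕 𝓖 n).zero_mem
    · have hmem := mul_mem_HF 𝓕 𝓖 i j' _ (c.2 i) _ (h.2 j')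
      have heq : i + j' = n := by omega
      rw [heq] at hmem
      exact hmem

theorem rel_lowered {a b : (HFil 𝓕 𝓖).rees}
    (h : RingQuot.Rel (grRel (HFil 𝓕 𝓖)) a b) : lowered 𝓕 𝓖 (a - b) := by
  induction h with
  | of h =>
    obtain ⟨rfl, rfl⟩ := h
    rw [sub_zero]
    constructor
    · show (Polynomial.X : Polynomial (A ⊗[k] B)).coeff 0 = 0
      simp
    · intro n
      show (Polynomial.X : Polynomial (A ⊗[k] B)).coeff (n + 1) ∈ HF 𝓕 𝓖 n
      rcases n with _ | m
      · rw [Polynomial.coeff_X_one]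
        exact one_mem_HF 𝓕 𝓖
      · rw [Polynomial.coeff_X]
        rw [if_neg (by omega)]
        exact (HF 𝓕 𝓖 _).zero_mem
  | add_left _ ih => rwa [add_sub_add_right_eq_sub]
  | mul_left _ ih =>
    rw [← sub_mul]
    exact lowered_mul_right 𝓕 𝓖 _ _ ih
  | mul_right _ ih =>
    rw [← mul_sub]
    exact lowered_mul_left 𝓕 𝓖 _ _ ih

theorem Smap_lowered {p : (HFil 𝓕 𝓖).rees} (h : lowered 𝓕 𝓖 p) :
    Smap 𝓕 𝓖 (p : Polynomial (A ⊗[k] B)) = 0 := by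
  rw [Smap_sum]
  apply Finset.sum_eq_zero
  intro n _
  rcases n with _ | m
  · rw [h.1, map_zero]
  · exact tmap_vanish 𝓕 𝓖 (Nat.lt_succ_self m) (h.2 m)

/-- The underlying function of the retraction `gr_H → gr_F ⊗ gr_G`. -/
def lamFun : (HFil 𝓕 𝓖).gr → 𝓕.gr ⊗[k] 𝓖.gr := fun x =>
  Quot.lift (fun p : (HFil 𝓕 𝓖).rees => Smap 𝓕 𝓖 (p : Polynomial (A ⊗[k] B)))
    (fun a b h => by
      have h0 := Smap_lowered 𝓕 𝓖 (rel_lowered 𝓕 𝓖 h)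
      have hc : ((a - b : (HFil 𝓕 𝓖).rees) : Polynomial (A ⊗[k] B))
          = (a : Polynomial (A ⊗[k] B)) - (b : Polynomial (A ⊗[k] B)) :=
        AddSubgroupClass.coe_sub a b
      rw [hc, map_sub] at h0
      exact sub_eq_zero.mp h0)
    (RingQuot.toQuot x)

theorem lamFun_mk (p : (HFil 𝓕 𝓖).rees) :
    lamFun 𝓕 𝓖 ((HFil 𝓕 𝓖).grProj p) = Smap 𝓕 𝓖 (p : Polynomial (A ⊗[k] B)) := by
  have h : (HFil 𝓕 𝓖).grProj p = ⟨Quot.mk _ p⟩ := by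
    simp only [grProj_def, RingQuot.mkAlgHom_def, RingQuot.mkRingHom_def]
    rfl
  rw [h]
  rfl

/-- The retraction `gr_H → gr_F ⊗ gr_G`, as a linear map. -/
def lam : (HFil 𝓕 𝓖).gr →ₗ[k] 𝓕.gr ⊗[k] 𝓖.gr where
  toFun := lamFun 𝓕 𝓖
  map_add' x y := by
    obtain ⟨p, rfl⟩ := grProj_surjective (HFil 𝓕 𝓖) x
    obtain ⟨q, rfl⟩ := grProj_surjective (HFil 𝓕 𝓖) y
    rw [← map_add, lamFun_mk, lamFun_mk, lamFun_mk, AddMemClass.coe_add, map_add]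
  map_smul' c x := by
    obtain ⟨p, rfl⟩ := grProj_surjective (HFil 𝓕 𝓖) x
    have hs : (HFil 𝓕 𝓖).grProj (c • p) = c • (HFil 𝓕 𝓖).grProj p :=
      map_smul (HFil 𝓕 𝓖).grProj.toLinearMap c p
    show lamFun 𝓕 𝓖 (c • (HFil 𝓕 𝓖).grProj p)
        = (RingHom.id k) c • lamFun 𝓕 𝓖 ((HFil 𝓕 𝓖).grProj p)
    rw [← hs, lamFun_mk, lamFun_mk, SetLike.val_smul, map_smul]
    rfl

theorem lam_mk (p : (HFil 𝓕 𝓖).rees) :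
    lam 𝓕 𝓖 ((HFil 𝓕 𝓖).grProj p) = Smap 𝓕 𝓖 (p : Polynomial (A ⊗[k] B)) :=
  lamFun_mk 𝓕 𝓖 p

theorem main_eval_mono (n m : ℕ) (a : 𝓕.F n) (b : 𝓖.F m) :
    Smap 𝓕 𝓖 ((reesL 𝓕 𝓖 (𝓕.monoMap n a) * reesR 𝓕 𝓖 (𝓖.monoMap m b) :
        (HFil 𝓕 𝓖).rees) : Polynomial (A ⊗[k] B))
      = 𝓕.grProj (𝓕.monoMap n a) ⊗ₜ[k] 𝓖.grProj (𝓖.monoMap m b) := by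
  have hval : ((reesL 𝓕 𝓖 (𝓕.monoMap n a) * reesR 𝓕 𝓖 (𝓖.monoMap m b) :
        (HFil 𝓕 𝓖).rees) : Polynomial (A ⊗[k] B))
      = Polynomial.monomial (n + m) ((a : A) ⊗ₜ[k] (b : B)) := by
    rw [MulMemClass.coe_mul, reesL_val, reesR_val, monoMap_val, monoMap_val,
      Polynomial.map_monomial, Polynomial.map_monomial, Polynomial.monomial_mul_monomial,
      inlH_apply, inrH_apply, Algebra.TensorProduct.tmul_mul_tmul, one_mul, mul_one]
  rw [hval, Smap_monomial, tmap_spec 𝓕 𝓖 a.2 b.2]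
  rfl

theorem main_eval (p : 𝓕.rees) (q : 𝓖.rees) :
    Smap 𝓕 𝓖 ((reesL 𝓕 𝓖 p * reesR 𝓕 𝓖 q : (HFil 𝓕 𝓖).rees) : Polynomial (A ⊗[k] B))
      = 𝓕.grProj p ⊗ₜ[k] 𝓖.grProj q := by
  have hp := rees_decomp 𝓕 p
  have hq := rees_decomp 𝓖 q
  conv_lhs => rw [hp, hq]
  conv_rhs => rw [hp, hq]
  rw [map_sum (reesL 𝓕 𝓖), map_sum (reesR 𝓕 𝓖), map_sum 𝓕.grProj, map_sum 𝓖.grProj,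
    MulMemClass.coe_mul, AddSubmonoidClass.coe_finset_sum, AddSubmonoidClass.coe_finset_sum,
    Finset.sum_mul_sum, TensorProduct.sum_tmul]
  rw [map_sum (Smap 𝓕 𝓖)]
  refine Finset.sum_congr rfl fun n hn => ?_
  rw [map_sum (Smap 𝓕 𝓖), TensorProduct.tmul_sum]
  refine Finset.sum_congr rfl fun m hm => ?_
  rw [← MulMemClass.coe_mul]
  exact main_eval_mono 𝓕 𝓖 n m ⟨(p : Polynomial A).coeff n, p.2 n⟩
    ⟨(q : Polynomial B).coeff m, q.2 m⟩

theorem lam_Phi (z : 𝓕.gr ⊗[k] 𝓖.gr) : lam 𝓕 𝓖 (Phi 𝓕 𝓖 z) = z := by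
  have h : (lam 𝓕 𝓖) ∘ₗ (Phi 𝓕 𝓖).toLinearMap = LinearMap.id := by
    apply TensorProduct.ext'
    intro x y
    obtain ⟨p, rfl⟩ := grProj_surjective 𝓕 x
    obtain ⟨q, rfl⟩ := grProj_surjective 𝓖 y
    rw [LinearMap.comp_apply, AlgHom.toLinearMap_apply, LinearMap.id_apply,
      Phi_tmul, phi1_mk, phi2_mk, ← map_mul, lam_mk]
    exact main_eval 𝓕 𝓖 p q
  have h2 := LinearMap.congr_fun h z
  rw [LinearMap.comp_apply, AlgHom.toLinearMap_apply, LinearMap.id_apply] at h2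
  exact h2

theorem sigmaH_mem (i : ℕ) (z : A ⊗[k] B) (hz' : z ∈ Submodule.span k (TS 𝓕 𝓖 i)) :
    ∀ hz : z ∈ (HFil 𝓕 𝓖).F i,
      sigma (HFil 𝓕 𝓖) i ⟨z, hz⟩ ∈ Submodule.map (Phi 𝓕 𝓖).toLinearMap
        (⨆ j ∈ Finset.range (i + 1), tensorSub k (𝓕.grPiece j) (𝓖.grPiece (i - j))) := by
  induction hz' using Submodule.span_induction with
  | mem z hmem =>
    intro hz
    obtain ⟨p', q', hpq, a, ha, b, hb, rfl⟩ := hmem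
    have hb' : b ∈ 𝓖.F (i - p') := F_mono 𝓖 (by omega) hb
    refine ⟨sigma 𝓕 p' ⟨a, ha⟩ ⊗ₜ[k] sigma 𝓖 (i - p') ⟨b, hb'⟩, ?_, ?_⟩
    · refine Submodule.mem_iSup_of_mem p'
        (Submodule.mem_iSup_of_mem (Finset.mem_range.mpr (by omega)) ?_)
      exact Submodule.subset_span ⟨_, ⟨⟨a, ha⟩, rfl⟩, _, ⟨⟨b, hb'⟩, rfl⟩, rfl⟩
    · exact Phi_sigma_tmul 𝓕 𝓖 (by omega) a ha b hb' hz
  | zero =>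
    intro hz
    have h0 : (⟨0, hz⟩ : (HFil 𝓕 𝓖).F i) = 0 := rfl
    rw [h0, map_zero]
    exact Submodule.zero_mem _
  | add x y hx hy ihx ihy =>
    intro hz
    have hxm : x ∈ (HFil 𝓕 𝓖).F i := by rw [HFil_F, HF_eq_span]; exact hx
    have hym : y ∈ (HFil 𝓕 𝓖).F i := by rw [HFil_F, HF_eq_span]; exact hy
    have hsum : (⟨x + y, hz⟩ : (HFil 𝓕 𝓖).F i) = ⟨x, hxm⟩ + ⟨y, hym⟩ := rfl
    rw [hsum, map_add]
    exact Submodule.add_mem _ (ihx hxm) (ihy hym)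
  | smul c x hx ihx =>
    intro hz
    have hxm : x ∈ (HFil 𝓕 𝓖).F i := by rw [HFil_F, HF_eq_span]; exact hx
    have hsm : (⟨c • x, hz⟩ : (HFil 𝓕 𝓖).F i) = c • (⟨x, hxm⟩ : (HFil 𝓕 𝓖).F i) := rfl
    rw [hsm, map_smul]
    exact Submodule.smul_mem _ _ (ihx hxm)

theorem Phi_surjective : Function.Surjective (Phi 𝓕 𝓖) := by
  intro x
  obtain ⟨p, rfl⟩ := grProj_surjective (HFil 𝓕 𝓖) x
  have hmem : (HFil 𝓕 𝓖).grProj p ∈ (Phi 𝓕 𝓖).range := by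
    rw [rees_decomp (HFil 𝓕 𝓖) p, map_sum]
    refine sum_mem fun n hn => ?_
    have hz' : ((p : Polynomial (A ⊗[k] B)).coeff n) ∈ Submodule.span k (TS 𝓕 𝓖 n) := by
      rw [← HF_eq_span]
      exact p.2 n
    obtain ⟨w, _, hw⟩ := sigmaH_mem 𝓕 𝓖 n _ hz' (p.2 n)
    exact ⟨w, hw⟩
  obtain ⟨y, hy⟩ := (AlgHom.mem_range (Phi 𝓕 𝓖)).mp hmem
  exact ⟨y, hy⟩

/-- The canonical isomorphism `gr_F(A) ⊗ gr_G(B) ≃ gr_H(A ⊗ B)`. -/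
def grEquiv : (𝓕.gr ⊗[k] 𝓖.gr) ≃ₐ[k] (HFil 𝓕 𝓖).gr :=
  AlgEquiv.ofBijective (Phi 𝓕 𝓖)
    ⟨Function.LeftInverse.injective (lam_Phi 𝓕 𝓖), Phi_surjective 𝓕 𝓖⟩

theorem grEquiv_apply (z : 𝓕.gr ⊗[k] 𝓖.gr) : grEquiv 𝓕 𝓖 z = Phi 𝓕 𝓖 z := rfl

theorem grPiece_H_eq (i : ℕ) :
    (HFil 𝓕 𝓖).grPiece i = Submodule.map (Phi 𝓕 𝓖).toLinearMap
      (⨆ j ∈ Finset.range (i + 1), tensorSub k (𝓕.grPiece j) (𝓖.grPiece (i - j))) := by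
  apply le_antisymm
  · rw [grPiece_eq]
    rintro w ⟨c, rfl⟩
    have hz' : (c : A ⊗[k] B) ∈ Submodule.span k (TS 𝓕 𝓖 i) := by
      rw [← HF_eq_span]
      exact c.2
    have h := sigmaH_mem 𝓕 𝓖 i _ hz' c.2
    have he : (⟨(c : A ⊗[k] B), c.2⟩ : (HFil 𝓕 𝓖).F i) = c := rfl
    rw [he] at h
    exact h
  · refine Submodule.map_le_iff_le_comap.mpr (iSup₂_le fun j hj => Submodule.span_le.mpr ?_)
    rintro w ⟨x, hx, y, hy, rfl⟩
    obtain ⟨a, rfl⟩ := hx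
    obtain ⟨b, rfl⟩ := hy
    have hj' := Finset.mem_range.mp hj
    have hab : (a : A) ⊗ₜ[k] (b : B) ∈ (HFil 𝓕 𝓖).F i :=
      tmul_mem_HF 𝓕 𝓖 (by omega) a.2 b.2
    refine Submodule.mem_comap.mpr ?_
    rw [grPiece_eq]
    refine ⟨⟨(a : A) ⊗ₜ[k] (b : B), hab⟩, ?_⟩
    exact (Phi_sigma_tmul 𝓕 𝓖 (by omega) (a : A) a.2 (b : B) b.2 hab).symm

theorem grPiece_map (i : ℕ) :
    Submodule.map (grEquiv 𝓕 𝓖).symm.toLinearMap ((HFil 𝓕 𝓖).grPiece i)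
      = ⨆ j ∈ Finset.range (i + 1), tensorSub k (𝓕.grPiece j) (𝓖.grPiece (i - j)) := by
  rw [grPiece_H_eq, ← Submodule.map_comp]
  have hcomp : (grEquiv 𝓕 𝓖).symm.toLinearMap ∘ₗ (Phi 𝓕 𝓖).toLinearMap = LinearMap.id := by
    apply LinearMap.ext
    intro z
    show (grEquiv 𝓕 𝓖).symm (Phi 𝓕 𝓖 z) = z
    rw [← grEquiv_apply, AlgEquiv.symm_apply_apply]
  rw [hcomp, Submodule.map_id]

end two

end S13

end S13Aux

/-- Lemma 1.2: for filtrations `F` of `A` and `G` of `B`, the family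
`H i = Σ_{j ≤ i} F j ⊗ G (i - j)` is an ℕ-filtration of `A ⊗ B`, whose associated graded
algebra is isomorphic, as a graded algebra, to `gr_F(A) ⊗ gr_G(B)`; moreover `H` is good if
`F` is good and `G` is firm, and `H` is firm if both `F` and `G` are firm. -/
theorem statement13 {k : Type v} [Field k]
    (A : Type u) [Ring A] [Algebra k A] (B : Type u) [Ring B] [Algebra k B]
    (𝓕 : AlgFiltration k A) (𝓖 : AlgFiltration k B) :
    ∃ 𝓗 : AlgFiltration k (A ⊗[k] B),
      (∀ i : ℕ, 𝓗.F i = ⨆ j ∈ Finset.range (i + 1), tensorSub k (𝓕.F j) (𝓖.F (i - j))) ∧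
      (∃ e : 𝓗.gr ≃ₐ[k] (𝓕.gr ⊗[k] 𝓖.gr),
        ∀ i : ℕ, Submodule.map e.toLinearMap (𝓗.grPiece i)
          = ⨆ j ∈ Finset.range (i + 1), tensorSub k (𝓕.grPiece j) (𝓖.grPiece (i - j))) ∧
      (IsDomain 𝓕.gr → IsFirmDomain k 𝓖.gr → IsDomain 𝓗.gr) ∧
      (IsFirmDomain k 𝓕.gr → IsFirmDomain k 𝓖.gr → IsFirmDomain k 𝓗.gr) := by
  refine ⟨S13.HFil 𝓕 𝓖, fun i => rfl, ⟨(S13.grEquiv 𝓕 𝓖).symm, S13.grPiece_map 𝓕 𝓖⟩, ?_, ?_⟩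
  · intro h1 h2
    haveI : IsDomain (𝓖.gr ⊗[k] 𝓕.gr) := h2 𝓕.gr h1
    have e2 := (S13.grEquiv 𝓕 𝓖).symm.trans (Algebra.TensorProduct.comm k 𝓕.gr 𝓖.gr)
    exact Function.Injective.isDomain e2.toAlgHom.toRingHom (by exact e2.injective)
  · intro h1 h2 D _ _ hD
    haveI : IsDomain (𝓕.gr ⊗[k] (𝓖.gr ⊗[k] D)) := h1 (𝓖.gr ⊗[k] D) (h2 D hD)
    have e3 := (Algebra.TensorProduct.congr (S13.grEquiv 𝓕 𝓖).symm
      (AlgEquiv.refl (A₁ := D))).trans (Algebra.TensorProduct.assoc (R := k) (S := k) (T := k) (A := 𝓕.gr) (C := 𝓖.gr) (D := D))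
    exact Function.Injective.isDomain e3.toAlgHom.toRingHom (by exact e3.injective)
end
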